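/- arXiv:2406.04246 — 7 statements merged into one kernel-verified Lean document; each statement's English description precedes it below -/
import Mathlib

section
/- Let P ∈ ℂ[z] with deg P = d ≥ 1, P(0) ≠ 0, and |P(z)| ≤ 1 for all z ∈ 𝕋. If Q₁, Q₂ ∈ ℂ[z] both have degree d, both have no roots in 𝔻, and both satisfy |P(z)|² + |Qᵢ(z)|² = 1 for all z ∈ 𝕋 (i = 1,2), then there exists c ∈ ℂ with |c| = 1 such that Q₂ = c·Q₁. -/
open Polynomial
noncomputable section

lemma my_eval_reverse (f : ℂ[X]) {z : ℂ} (hz : z ≠ 0) :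
    f.reverse.eval z = z ^ f.natDegree * f.eval z⁻¹ := by
  letI := invertibleOfNonzero (inv_ne_zero hz)
  have h := eval₂_reverse_mul_pow (RingHom.id ℂ) z⁻¹ f
  rw [invOf_eq_inv, inv_inv] at h
  simp only [eval₂_eq_eval_map, Polynomial.map_id] at h
  rw [← h, mul_comm, mul_assoc, ← mul_pow, inv_mul_cancel₀ hz, one_pow, mul_one]

lemma my_reverse_pow (f : ℂ[X]) (n : ℕ) : (f ^ n).reverse = f.reverse ^ n := by
  induction n with
  | zero => simp [Polynomial.reverse]
  | succ n ih => rw [pow_succ, reverse_mul_of_domain, ih, pow_succ]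

lemma my_reverse_X_sub_C {c : ℂ} (hc : c ≠ 0) :
    (X - C c).reverse = C (-c) * (X - C c⁻¹) := by
  have h1 : (X - C c).natDegree = 1 := natDegree_X_sub_C c
  rw [Polynomial.reverse, h1]
  have : (X - C c : ℂ[X]) = X ^ 1 + C (-c) := by ring_nf; rw [map_neg]; ring
  rw [this, reflect_add, reflect_monomial, reflect_C]
  have : revAt 1 1 = 0 := by decide
  rw [this]
  have h2 : (C c : ℂ[X]) * C c⁻¹ = 1 := by rw [← C_mul, mul_inv_cancel₀ hc, map_one]
  ring_nf
  simp only [map_neg]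
  linear_combination -h2

lemma my_rootMultiplicity_reverse (f : ℂ[X]) (hf : f ≠ 0) {α : ℂ} (hα : α ≠ 0) :
    rootMultiplicity α f.reverse = rootMultiplicity α⁻¹ f := by
  set m := rootMultiplicity α⁻¹ f with hm
  set R := f /ₘ (X - C α⁻¹) ^ m with hR
  have hfact : (X - C α⁻¹) ^ m * R = f := pow_mul_divByMonic_rootMultiplicity_eq f α⁻¹
  have hRnz : R.eval α⁻¹ ≠ 0 := eval_divByMonic_pow_rootMultiplicity_ne_zero α⁻¹ hf
  have hRrev : (R.reverse).eval α ≠ 0 := by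
    rw [my_eval_reverse R hα]
    exact mul_ne_zero (pow_ne_zero _ hα) hRnz
  have hRrev0 : R.reverse ≠ 0 := fun h => hRrev (by simp [h])
  have hrev : f.reverse = (C ((-α⁻¹)^m)) * ((X - C α)^m * R.reverse) := by
    conv_lhs => rw [← hfact]
    rw [reverse_mul_of_domain, my_reverse_pow, my_reverse_X_sub_C (inv_ne_zero hα), inv_inv,
      mul_pow, ← C_pow]
    ring
  have hC : (C ((-α⁻¹)^m) : ℂ[X]) ≠ 0 := by
    simp [pow_ne_zero, inv_ne_zero hα]
  have hmon : ((X - C α)^m : ℂ[X]) ≠ 0 := pow_ne_zero _ (X_sub_C_ne_zero α)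
  rw [hrev, rootMultiplicity_mul (mul_ne_zero hC (mul_ne_zero hmon hRrev0)),
    rootMultiplicity_mul (mul_ne_zero hmon hRrev0), rootMultiplicity_C,
    rootMultiplicity_X_sub_C_pow, rootMultiplicity_eq_zero hRrev]
  omega

lemma my_rootMultiplicity_map_conj (f : ℂ[X]) (α : ℂ) :
    rootMultiplicity α (f.map (starRingEnd ℂ)) = rootMultiplicity ((starRingEnd ℂ) α) f := by
  classical
  have hsplit : f.Splits := IsAlgClosed.splits f
  rw [← count_roots, ← count_roots, hsplit.roots_map_of_injective (RingHom.injective _)]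
  have : α = (starRingEnd ℂ) ((starRingEnd ℂ) α) := (Complex.conj_conj α).symm
  conv_lhs => rw [this]
  exact Multiset.count_map_eq_count' _ _ (RingHom.injective _) _

lemma my_eval_map_conj (f : ℂ[X]) (z : ℂ) :
    (f.map (starRingEnd ℂ)).eval z = (starRingEnd ℂ) (f.eval ((starRingEnd ℂ) z)) := by
  rw [eval_map]
  conv_lhs => rw [← Complex.conj_conj z]
  exact eval₂_at_apply (starRingEnd ℂ) _

lemma my_circle_infinite : Set.Infinite {z : ℂ | ‖z‖ = 1} := by
  have habs : ∀ t : ℝ, ‖Complex.exp (t * Complex.I)‖ = 1 :=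
    Complex.norm_exp_ofReal_mul_I
  haveI : Infinite ↑(Set.Ioo (0:ℝ) 1) := Set.Ioo.infinite (by norm_num)
  apply Set.infinite_of_injective_forall_mem
    (f := fun t : Set.Ioo (0:ℝ) 1 => Complex.exp (t * Complex.I))
  · rintro ⟨t, ht0, ht1⟩ ⟨s, hs0, hs1⟩ h
    rw [Complex.exp_eq_exp_iff_exists_int] at h
    obtain ⟨n, hn⟩ := h
    have hts : (t : ℂ) = ((s : ℂ) + n * (2 * Real.pi)) := by
      apply mul_right_cancel₀ Complex.I_ne_zero
      linear_combination hn
    have hre : t = s + n * (2 * Real.pi) := by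
      exact_mod_cast congrArg Complex.re hts
    have hn0 : n = 0 := by
      by_contra hne
      have h1 : (1:ℝ) ≤ |(n:ℝ)| := by
        exact_mod_cast Int.one_le_abs (by exact_mod_cast hne)
      have hpi : (2:ℝ) * Real.pi ≥ 6 := by
        nlinarith [Real.pi_gt_three]
      have hlt : |t - s| < 1 := by
        rw [abs_sub_lt_iff]; constructor <;> nlinarith
      have h2 : |t - s| = |(n:ℝ)| * (2 * Real.pi) := by
        rw [hre]
        have he : s + n*(2*Real.pi) - s = n * (2*Real.pi) := by ring
        rw [he, abs_mul, abs_of_nonneg (by positivity : (0:ℝ) ≤ 2*Real.pi)]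
      nlinarith
    apply Subtype.ext
    simpa [hn0] using hre
  · exact fun t => habs t


/-- **Uniqueness of the canonical complementary polynomial up to a multiplicative
phase.** If `P ∈ ℂ[z]` has `deg P = d ≥ 1`, `P(0) ≠ 0`, and `|P| ≤ 1` on the unit circle,
and `Q₁, Q₂` are both degree-`d` complementary polynomials to `P` with no roots in the
open unit disk, then `Q₂ = c Q₁` for some unimodular constant `c`. -/
theorem canonical_complementary_polynomial_unique
    (d : ℕ) (hd : 1 ≤ d) (P : Polynomial ℂ) (hdeg : P.natDegree = d)
    (hP0 : P.eval 0 ≠ 0)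
    (hP : ∀ z : ℂ, ‖z‖ = 1 → ‖P.eval z‖ ≤ 1)
    (Q₁ Q₂ : Polynomial ℂ)
    (hQ₁deg : Q₁.natDegree = d) (hQ₂deg : Q₂.natDegree = d)
    (hQ₁roots : ∀ z : ℂ, ‖z‖ < 1 → Q₁.eval z ≠ 0)
    (hQ₂roots : ∀ z : ℂ, ‖z‖ < 1 → Q₂.eval z ≠ 0)
    (hQ₁ : ∀ z : ℂ, ‖z‖ = 1 →
      ‖P.eval z‖ ^ 2 + ‖Q₁.eval z‖ ^ 2 = 1)
    (hQ₂ : ∀ z : ℂ, ‖z‖ = 1 →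
      ‖P.eval z‖ ^ 2 + ‖Q₂.eval z‖ ^ 2 = 1) :
    ∃ c : ℂ, ‖c‖ = 1 ∧ Q₂ = Polynomial.C c * Q₁ := by
  classical
  have hQ₁0 : Q₁ ≠ 0 := fun h => by rw [h, natDegree_zero] at hQ₁deg; omega
  have hQ₂0 : Q₂ ≠ 0 := fun h => by rw [h, natDegree_zero] at hQ₂deg; omega
  set σ := starRingEnd ℂ with hσ
  set S₁ := (Q₁.map σ).reverse with hS₁
  set S₂ := (Q₂.map σ).reverse with hS₂
  have hS₁0 : S₁ ≠ 0 := by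
    rw [hS₁, Ne, reverse_eq_zero, Polynomial.map_eq_zero]; exact hQ₁0
  have hS₂0 : S₂ ≠ 0 := by
    rw [hS₂, Ne, reverse_eq_zero, Polynomial.map_eq_zero]; exact hQ₂0
  have habs : ∀ z : ℂ, ‖z‖ = 1 →
      ‖Q₁.eval z‖ = ‖Q₂.eval z‖ := by
    intro z hz
    have h1 := hQ₁ z hz
    have h2 := hQ₂ z hz
    nlinarith [norm_nonneg (Q₁.eval z), norm_nonneg (Q₂.eval z)]
  have key : Q₁ * S₁ = Q₂ * S₂ := by
    apply eq_of_infinite_eval_eq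
    apply Set.Infinite.mono _ my_circle_infinite
    intro z hz
    have hz1 : ‖z‖ = 1 := hz
    have hz0 : z ≠ 0 := by
      intro h; rw [h] at hz1; simp at hz1
    have hinv : z⁻¹ = σ z := by
      rw [Complex.inv_def, Complex.normSq_eq_norm_sq, hz1]
      simp [hσ]
    have hn : Complex.normSq (Q₁.eval z) = Complex.normSq (Q₂.eval z) := by
      rw [← Complex.sq_norm, ← Complex.sq_norm, habs z hz1]
    simp only [Set.mem_setOf_eq, eval_mul, hS₁, hS₂]
    rw [my_eval_reverse _ hz0, my_eval_reverse _ hz0, hinv, my_eval_map_conj,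
      my_eval_map_conj, Complex.conj_conj, natDegree_map, natDegree_map, hQ₁deg, hQ₂deg]
    calc Q₁.eval z * (z ^ d * σ (Q₁.eval z)) = z ^ d * (Q₁.eval z * σ (Q₁.eval z)) := by ring
      _ = z ^ d * (Q₂.eval z * σ (Q₂.eval z)) := by
            rw [Complex.mul_conj, Complex.mul_conj, hn]
      _ = Q₂.eval z * (z ^ d * σ (Q₂.eval z)) := by ring
  have hSmult : ∀ (Q : ℂ[X]), Q ≠ 0 → ∀ α : ℂ, α ≠ 0 →
      rootMultiplicity α ((Q.map σ).reverse) = rootMultiplicity (σ α)⁻¹ Q := by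
    intro Q hQ α hα
    rw [my_rootMultiplicity_reverse _ (by rwa [Ne, Polynomial.map_eq_zero]) hα,
      my_rootMultiplicity_map_conj]
    congr 1
    exact map_inv₀ σ α
  have hmult : ∀ α : ℂ, rootMultiplicity α Q₁ = rootMultiplicity α Q₂ := by
    intro α
    have h12 := congrArg (rootMultiplicity α) key
    rw [rootMultiplicity_mul (mul_ne_zero hQ₁0 hS₁0),
      rootMultiplicity_mul (mul_ne_zero hQ₂0 hS₂0)] at h12
    rcases lt_trichotomy ‖α‖ 1 with h | h | h
    · rw [rootMultiplicity_eq_zero (hQ₁roots α h), rootMultiplicity_eq_zero (hQ₂roots α h)]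
    · have hα0 : α ≠ 0 := by intro e; rw [e] at h; simp at h
      have hone : σ α * α = 1 := by
        rw [mul_comm, Complex.mul_conj, Complex.normSq_eq_norm_sq, h]
        norm_num
      have hαinv : (σ α)⁻¹ = α := inv_eq_of_mul_eq_one_right hone
      rw [hS₁, hS₂, hSmult Q₁ hQ₁0 α hα0, hSmult Q₂ hQ₂0 α hα0, hαinv] at h12
      omega
    · have hα0 : α ≠ 0 := by intro e; rw [e] at h; simp at h; linarith
      have h1lt : ‖(σ α)⁻¹‖ < 1 := by
        rw [norm_inv, hσ, Complex.norm_conj]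
        rw [inv_lt_one_iff₀]
        right; exact h
      have hm₁ : rootMultiplicity α S₁ = 0 := by
        rw [hS₁, hSmult Q₁ hQ₁0 α hα0]
        exact rootMultiplicity_eq_zero (hQ₁roots _ h1lt)
      have hm₂ : rootMultiplicity α S₂ = 0 := by
        rw [hS₂, hSmult Q₂ hQ₂0 α hα0]
        exact rootMultiplicity_eq_zero (hQ₂roots _ h1lt)
      omega
  have hroots : Q₁.roots = Q₂.roots := Multiset.ext.mpr fun a => by
    rw [count_roots, count_roots, hmult a]
  have hsp₁ := (IsAlgClosed.splits Q₁).eq_prod_roots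
  have hsp₂ := (IsAlgClosed.splits Q₂).eq_prod_roots
  have hlc₁ : Q₁.leadingCoeff ≠ 0 := leadingCoeff_ne_zero.mpr hQ₁0
  set c := Q₂.leadingCoeff / Q₁.leadingCoeff with hc
  have hEq : Q₂ = C c * Q₁ := by
    conv_lhs => rw [hsp₂, ← hroots]
    conv_rhs => rw [hsp₁]
    rw [← mul_assoc, ← C_mul, hc]
    congr 2
    field_simp
  refine ⟨c, ?_, hEq⟩
  obtain ⟨z₀, hz₀⟩ := (my_circle_infinite.diff (finite_setOf_isRoot hQ₁0)).nonempty
  have h1 : ‖z₀‖ = 1 := hz₀.1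
  have h2 : Q₁.eval z₀ ≠ 0 := fun hh => hz₀.2 hh
  have h3 := habs z₀ h1
  rw [hEq, eval_mul, eval_C, norm_mul] at h3
  have h4 : ‖Q₁.eval z₀‖ ≠ 0 := by simpa using h2
  have h5 : ‖c‖ * ‖Q₁.eval z₀‖ = 1 * ‖Q₁.eval z₀‖ := by
    rw [one_mul]; exact h3.symm
  exact mul_right_cancel₀ h4 h5
end
end

section
/- Let P ∈ ℂ[z] be a polynomial all of whose coefficients are real, with deg P = d ≥ 1, P(0) ≠ 0, and |P(z)| ≤ 1 for all z ∈ 𝕋. Then there exists a polynomial Q ∈ ℂ[z] all of whose coefficients are real, with deg Q = d, with no roots in 𝔻, and satisfying |P(z)|² + |Q(z)|² = 1 for all z ∈ 𝕋. -/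
open Polynomial Complex

noncomputable section FejerRieszAux

/-- Evaluation of the reversed polynomial. -/
lemma fr_reverse_eval (P : Polynomial ℂ) {z : ℂ} (hz : z ≠ 0) :
    P.reverse.eval z = z ^ P.natDegree * P.eval z⁻¹ := by
  have hz' : z⁻¹ ≠ 0 := inv_ne_zero hz
  have : Invertible (z⁻¹) := invertibleOfNonzero hz'
  have h := Polynomial.eval₂_reverse_mul_pow (RingHom.id ℂ) z⁻¹ P
  rw [invOf_eq_inv, inv_inv] at h
  have h2 : P.reverse.eval z * (z⁻¹) ^ P.natDegree = P.eval z⁻¹ := h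
  rw [← h2]
  rw [mul_left_comm, ← mul_pow, mul_inv_cancel₀ hz, one_pow, mul_one]

/-- A polynomial with real coefficients is fixed by coefficientwise conjugation. -/
lemma fr_map_conj (P : Polynomial ℂ) (h : ∀ n : ℕ, (P.coeff n).im = 0) :
    P.map (starRingEnd ℂ) = P := by
  ext n
  simp only [coeff_map]
  exact Complex.conj_eq_iff_im.mpr (h n)

lemma fr_eval_conj (P : Polynomial ℂ) (h : P.map (starRingEnd ℂ) = P) (z : ℂ) :
    P.eval ((starRingEnd ℂ) z) = (starRingEnd ℂ) (P.eval z) := by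
  conv_lhs => rw [← h]
  rw [eval_map]
  exact eval₂_at_apply (starRingEnd ℂ) z

/-- Halving a multiset all of whose multiplicities are even. -/
lemma fr_half_multiset (s : Multiset ℂ) (h : ∀ w : ℂ, Even (s.count w)) :
    ∃ t : Multiset ℂ, t + t = s ∧ ∀ w : ℂ, t.count w = s.count w / 2 := by
  classical
  set t := s.toFinset.val.bind fun w => Multiset.replicate (s.count w / 2) w with htdef
  have hcount : ∀ w : ℂ, t.count w = s.count w / 2 := by
    intro w
    rw [htdef, Multiset.count_bind]
    have hterm : ∀ x : ℂ, Multiset.count w (Multiset.replicate (s.count x / 2) x)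
        = if x = w then s.count x / 2 else 0 := fun x => Multiset.count_replicate _ _ _
    have hsum : (Multiset.map
          (fun x => Multiset.count w (Multiset.replicate (s.count x / 2) x))
          s.toFinset.val).sum
        = ∑ x ∈ s.toFinset, if x = w then s.count x / 2 else 0 := by
      rw [Finset.sum]
      congr 1
      exact Multiset.map_congr rfl fun x _ => hterm x
    rw [hsum, Finset.sum_ite_eq']
    by_cases hw : w ∈ s.toFinset
    · rw [if_pos hw]
    · rw [if_neg hw]
      have : s.count w = 0 := Multiset.count_eq_zero.mpr (fun hmem => hw (Multiset.mem_toFinset.mpr hmem))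
      omega
  refine ⟨t, ?_, hcount⟩
  apply Multiset.ext.mpr
  intro w
  rw [Multiset.count_add, hcount]
  rcases h w with ⟨k, hk⟩
  omega

/-- Roots of a polynomial on the unit circle, where (after division by `z^d`) the
polynomial is nonnegative, have even multiplicity. -/
lemma fr_even_mult (F : Polynomial ℂ) (hF : F ≠ 0) (d : ℕ) (w : ℂ)
    (hw : ‖w‖ = 1)
    (hnn : ∀ z : ℂ, ‖z‖ = 1 → ∃ r : ℝ, 0 ≤ r ∧ F.eval z = z ^ d * (r : ℂ)) :
    Even (F.rootMultiplicity w) := by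
  by_contra hodd
  rw [Nat.not_even_iff_odd] at hodd
  set m := F.rootMultiplicity w with hm
  set G := F /ₘ (X - C w) ^ m with hG
  have hGw : G.eval w ≠ 0 := Polynomial.eval_divByMonic_pow_rootMultiplicity_ne_zero w hF
  have hFG : (X - C w) ^ m * G = F := Polynomial.pow_mul_divByMonic_rootMultiplicity_eq F w
  have hw0 : w ≠ 0 := fun h => by rw [h] at hw; simp at hw
  set zf : ℝ → ℂ := fun t => w * Complex.exp ((t : ℂ) * Complex.I) with hzf
  have hzabs : ∀ t : ℝ, ‖zf t‖ = 1 := by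
    intro t
    rw [hzf]
    simp [norm_mul, hw, Complex.norm_exp]
  have hz0 : ∀ t : ℝ, zf t ≠ 0 := by
    intro t h
    have h2 := hzabs t
    rw [h] at h2; simp at h2
  set h : ℝ → ℂ := fun t =>
    ((zf t) ^ d)⁻¹ * (w * Complex.exp (((t / 2 : ℝ) : ℂ) * Complex.I) * (2 * Complex.I)) ^ m
      * G.eval (zf t) with hh
  have hzfc : Continuous zf := by
    apply continuous_const.mul
    exact Complex.continuous_exp.comp (Complex.continuous_ofReal.mul continuous_const)
  have hcont : Continuous h := by
    apply Continuous.mul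
    apply Continuous.mul
    · exact (hzfc.pow d).inv₀ fun t => pow_ne_zero _ (hz0 t)
    · apply Continuous.pow
      apply Continuous.mul
      · apply continuous_const.mul
        apply Complex.continuous_exp.comp
        exact (Complex.continuous_ofReal.comp (continuous_id.div_const 2)).mul continuous_const
      · exact continuous_const
    · exact G.continuous.comp hzfc
  have hh0 : h 0 ≠ 0 := by
    rw [hh]
    simp only [hzf]
    push_cast
    simp only [zero_mul, Complex.exp_zero, mul_one, zero_div]
    apply mul_ne_zero
    apply mul_ne_zero
    · exact inv_ne_zero (pow_ne_zero _ (by simpa using hw0))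
    · apply pow_ne_zero
      apply mul_ne_zero (by simpa using hw0)
      simp [Complex.I_ne_zero]
    · simpa using hGw
  have hsin : ∀ t : ℝ, zf t - w
      = w * Complex.exp (((t / 2 : ℝ) : ℂ) * Complex.I) * (2 * Complex.I)
        * ((Real.sin (t / 2) : ℝ) : ℂ) := by
    intro t
    rw [hzf]
    beta_reduce
    have e1 : (t : ℂ) * Complex.I
        = ((t / 2 : ℝ) : ℂ) * Complex.I + ((t / 2 : ℝ) : ℂ) * Complex.I := by
      push_cast; ring
    rw [e1, Complex.exp_add, Complex.exp_mul_I, Complex.ofReal_sin]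
    linear_combination w * Complex.sin_sq_add_cos_sq (((t / 2 : ℝ) : ℂ))
      - w * Complex.sin (((t / 2 : ℝ) : ℂ)) ^ 2 * Complex.I_sq
  have hkey : ∀ t : ℝ, ∃ r : ℝ, 0 ≤ r ∧
      ((Real.sin (t / 2) : ℝ) : ℂ) ^ m * h t = (r : ℂ) := by
    intro t
    obtain ⟨r, hr0, hFr⟩ := hnn (zf t) (hzabs t)
    refine ⟨r, hr0, ?_⟩
    have h1 := congrArg (Polynomial.eval (zf t)) hFG
    simp only [Polynomial.eval_mul, Polynomial.eval_pow, Polynomial.eval_sub,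
      Polynomial.eval_X, Polynomial.eval_C] at h1
    rw [hFr, hsin t, mul_pow] at h1
    have hzd : (zf t) ^ d ≠ 0 := pow_ne_zero _ (hz0 t)
    rw [hh]
    beta_reduce
    have hre : ((Real.sin (t / 2) : ℝ) : ℂ) ^ m *
        ((zf t ^ d)⁻¹ * (w * Complex.exp (((t / 2 : ℝ) : ℂ) * Complex.I) * (2 * Complex.I)) ^ m
          * G.eval (zf t))
        = (zf t ^ d)⁻¹ * ((w * Complex.exp (((t / 2 : ℝ) : ℂ) * Complex.I) * (2 * Complex.I)) ^ m
          * ((Real.sin (t / 2) : ℝ) : ℂ) ^ m * G.eval (zf t)) := by ring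
    rw [hre, h1, inv_mul_cancel_left₀ hzd]
  -- one-sided sign information
  have hS1 : ∀ t ∈ Set.Ioo (0 : ℝ) Real.pi, (h t).im = 0 ∧ 0 ≤ (h t).re := by
    intro t ht
    obtain ⟨r, hr0, hr⟩ := hkey t
    have hs : 0 < Real.sin (t / 2) := by
      apply Real.sin_pos_of_pos_of_lt_pi
      · linarith [ht.1]
      · have := Real.pi_pos; linarith [ht.2]
    have hsm : ((Real.sin (t / 2) : ℝ) : ℂ) ^ m ≠ 0 := by
      apply pow_ne_zero
      exact_mod_cast hs.ne'
    have hht : h t = ((r / Real.sin (t / 2) ^ m : ℝ) : ℂ) := by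
      rw [Complex.ofReal_div, Complex.ofReal_pow, eq_div_iff hsm]
      linear_combination hr
    rw [hht]
    refine ⟨Complex.ofReal_im _, ?_⟩
    simp only [Complex.ofReal_re]
    exact div_nonneg hr0 (pow_nonneg hs.le m)
  have hS2 : ∀ t ∈ Set.Ioo (-Real.pi) (0 : ℝ), (h t).im = 0 ∧ (h t).re ≤ 0 := by
    intro t ht
    obtain ⟨r, hr0, hr⟩ := hkey t
    have hs : Real.sin (t / 2) < 0 := by
      apply Real.sin_neg_of_neg_of_neg_pi_lt
      · linarith [ht.2]
      · have := Real.pi_pos; linarith [ht.1]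
    have hsmneg : Real.sin (t / 2) ^ m < 0 := Odd.pow_neg hodd hs
    have hsm : ((Real.sin (t / 2) : ℝ) : ℂ) ^ m ≠ 0 := by
      apply pow_ne_zero
      exact_mod_cast hs.ne
    have hht : h t = ((r / Real.sin (t / 2) ^ m : ℝ) : ℂ) := by
      rw [Complex.ofReal_div, Complex.ofReal_pow, eq_div_iff hsm]
      linear_combination hr
    rw [hht]
    refine ⟨Complex.ofReal_im _, ?_⟩
    simp only [Complex.ofReal_re]
    exact div_nonpos_of_nonneg_of_nonpos hr0 hsmneg.le
  -- pass to the limit from both sides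
  have hcl : IsClosed {z : ℂ | z.im = 0 ∧ 0 ≤ z.re} := by
    have : {z : ℂ | z.im = 0 ∧ 0 ≤ z.re} = {z | z.im = 0} ∩ {z | 0 ≤ z.re} := rfl
    rw [this]
    exact (isClosed_eq Complex.continuous_im continuous_const).inter
      (isClosed_le continuous_const Complex.continuous_re)
  have hcl2 : IsClosed {z : ℂ | z.im = 0 ∧ z.re ≤ 0} := by
    have : {z : ℂ | z.im = 0 ∧ z.re ≤ 0} = {z | z.im = 0} ∩ {z | z.re ≤ 0} := rfl
    rw [this]
    exact (isClosed_eq Complex.continuous_im continuous_const).inter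
      (isClosed_le Complex.continuous_re continuous_const)
  have hmem1 : h 0 ∈ {z : ℂ | z.im = 0 ∧ 0 ≤ z.re} := by
    refine hcl.mem_of_tendsto ((hcont.tendsto 0).mono_left
      (nhdsWithin_le_nhds (s := Set.Ioi (0:ℝ)))) ?_
    have h1 : ∀ᶠ t in nhdsWithin (0 : ℝ) (Set.Ioi 0), t < Real.pi :=
      Filter.Eventually.filter_mono nhdsWithin_le_nhds (eventually_lt_nhds Real.pi_pos)
    have h2 : ∀ᶠ t in nhdsWithin (0 : ℝ) (Set.Ioi 0), t ∈ Set.Ioi (0:ℝ) :=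
      eventually_mem_nhdsWithin
    filter_upwards [h1, h2] with t ht1 ht2
    exact hS1 t ⟨ht2, ht1⟩
  have hmem2 : h 0 ∈ {z : ℂ | z.im = 0 ∧ z.re ≤ 0} := by
    refine hcl2.mem_of_tendsto ((hcont.tendsto 0).mono_left
      (nhdsWithin_le_nhds (s := Set.Iio (0:ℝ)))) ?_
    have h1 : ∀ᶠ t in nhdsWithin (0 : ℝ) (Set.Iio 0), -Real.pi < t :=
      Filter.Eventually.filter_mono nhdsWithin_le_nhds
        (eventually_gt_nhds (by linarith [Real.pi_pos]))
    have h2 : ∀ᶠ t in nhdsWithin (0 : ℝ) (Set.Iio 0), t ∈ Set.Iio (0:ℝ) :=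
      eventually_mem_nhdsWithin
    filter_upwards [h1, h2] with t ht1 ht2
    exact hS2 t ⟨ht1, ht2⟩
  apply hh0
  have hre : (h 0).re = 0 := le_antisymm hmem2.2 hmem1.2
  have him : (h 0).im = 0 := hmem1.1
  exact Complex.ext (by simpa using hre) (by simpa using him)

/-- Pointwise root pairing identity on the unit circle. -/
lemma fr_abs_pt {z r : ℂ} (hz : ‖z‖ = 1) (hr : r ≠ 0) :
    ‖z - ((starRingEnd ℂ) r)⁻¹‖ = ‖z - r‖ / ‖r‖ := by
  have hcr : (starRingEnd ℂ) r ≠ 0 := by simpa using hr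
  have h1 : z - ((starRingEnd ℂ) r)⁻¹
      = (z * (starRingEnd ℂ) r - 1) * ((starRingEnd ℂ) r)⁻¹ := by
    field_simp
  have hz1 : z * (starRingEnd ℂ) z = 1 := by
    rw [Complex.mul_conj, Complex.normSq_eq_norm_sq, hz]; norm_num
  have h2 : z * (starRingEnd ℂ) r - 1 = z * (starRingEnd ℂ) (r - z) := by
    rw [map_sub, mul_sub, hz1]
  have h3 : ‖r - z‖ = ‖z - r‖ :=
    norm_sub_rev r z
  rw [h1, norm_mul, norm_inv, h2, norm_mul, Complex.norm_conj, Complex.norm_conj, hz, one_mul,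
    h3, div_eq_mul_inv]

end FejerRieszAux

/-- **Real complementary polynomials** (Corollary 1). -/
theorem real_canonical_complementary_polynomial
    (d : ℕ) (hd : 1 ≤ d) (P : Polynomial ℂ)
    (hPreal : ∀ n : ℕ, (P.coeff n).im = 0)
    (hdeg : P.natDegree = d) (hP0 : P.eval 0 ≠ 0)
    (hP : ∀ z : ℂ, ‖z‖ = 1 → ‖P.eval z‖ ≤ 1) :
    ∃ Q : Polynomial ℂ,
      (∀ n : ℕ, (Q.coeff n).im = 0) ∧
      Q.natDegree = d ∧
      (∀ z : ℂ, ‖z‖ < 1 → Q.eval z ≠ 0) ∧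
      (∀ z : ℂ, ‖z‖ = 1 →
        ‖P.eval z‖ ^ 2 + ‖Q.eval z‖ ^ 2 = 1) := by
  classical
  have hPne : P ≠ 0 := fun h => hP0 (by simp [h])
  have ha0 : P.coeff 0 ≠ 0 := by rwa [Polynomial.coeff_zero_eq_eval_zero]
  have hb0 : P.leadingCoeff ≠ 0 := Polynomial.leadingCoeff_ne_zero.mpr hPne
  have htrail : P.natTrailingDegree = 0 := natTrailingDegree_eq_zero.mpr (Or.inr ha0)
  have hmapP : P.map (starRingEnd ℂ) = P := fr_map_conj P hPreal
  set R : Polynomial ℂ := P.reverse with hRdef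
  have hRne : R ≠ 0 := by
    rw [hRdef, Ne, Polynomial.reverse_eq_zero]; exact hPne
  have hRdeg : R.natDegree = d := by
    rw [hRdef, Polynomial.reverse_natDegree, htrail, hdeg, Nat.sub_zero]
  set F : Polynomial ℂ := X ^ d - P * R with hFdef
  have hPRdeg : (P * R).natDegree = 2 * d := by
    rw [Polynomial.natDegree_mul hPne hRne, hdeg, hRdeg]; ring
  have hPRlead : (P * R).leadingCoeff = P.leadingCoeff * P.coeff 0 := by
    rw [Polynomial.leadingCoeff_mul, hRdef, Polynomial.reverse_leadingCoeff,
      Polynomial.trailingCoeff, htrail]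
  have hddlt : (X ^ d : Polynomial ℂ).natDegree < (P * R).natDegree := by
    rw [Polynomial.natDegree_X_pow, hPRdeg]; omega
  have hFdeg : F.natDegree = 2 * d := by
    rw [hFdef, Polynomial.natDegree_sub_eq_right_of_natDegree_lt hddlt, hPRdeg]
  have hFlead : F.leadingCoeff = -(P.leadingCoeff * P.coeff 0) := by
    rw [Polynomial.leadingCoeff, hFdeg, hFdef]
    rw [Polynomial.coeff_sub, Polynomial.coeff_X_pow, if_neg (by omega : ¬ 2 * d = d)]
    rw [← hPRdeg, Polynomial.coeff_natDegree, hPRlead]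
    ring
  have hFleadne : F.leadingCoeff ≠ 0 := by
    rw [hFlead]; exact neg_ne_zero.mpr (mul_ne_zero hb0 ha0)
  have hFne : F ≠ 0 := Polynomial.leadingCoeff_ne_zero.mp hFleadne
  have hF0 : F.eval 0 ≠ 0 := by
    rw [hFdef]
    simp only [Polynomial.eval_sub, Polynomial.eval_pow, Polynomial.eval_X,
      Polynomial.eval_mul]
    rw [zero_pow (by omega : d ≠ 0)]
    have : R.eval 0 = P.leadingCoeff := by
      rw [Polynomial.coeff_zero_eq_eval_zero] at *
      rw [← Polynomial.coeff_zero_eq_eval_zero, hRdef, Polynomial.coeff_zero_reverse]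
    rw [this]
    simpa using mul_ne_zero hP0 hb0
  -- circle identity
  have hcirc : ∀ z : ℂ, ‖z‖ = 1 →
      F.eval z = z ^ d * ((((1 : ℝ) - ‖P.eval z‖ ^ 2 : ℝ)) : ℂ) := by
    intro z hz
    have hz0 : z ≠ 0 := by
      intro h; rw [h] at hz; simp at hz
    have hinv : z⁻¹ = (starRingEnd ℂ) z := by
      rw [Complex.inv_def, Complex.normSq_eq_norm_sq, hz]
      simp
    have hRz : R.eval z = z ^ d * (starRingEnd ℂ) (P.eval z) := by
      rw [hRdef, fr_reverse_eval P hz0, hdeg, hinv, fr_eval_conj P hmapP]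
    rw [hFdef]
    simp only [Polynomial.eval_sub, Polynomial.eval_pow, Polynomial.eval_X,
      Polynomial.eval_mul, hRz]
    have hcc : (starRingEnd ℂ) (P.eval z) * P.eval z
        = ((‖P.eval z‖ ^ 2 : ℝ) : ℂ) := by
      rw [mul_comm, Complex.mul_conj, Complex.normSq_eq_norm_sq]
    push_cast at hcc ⊢
    linear_combination (-(z ^ d) : ℂ) * hcc
  -- functional equation
  have hfun : ∀ z : ℂ, z ≠ 0 → F.eval z = z ^ (2 * d) * F.eval z⁻¹ := by
    intro z hz0
    have h1 : R.eval z = z ^ d * P.eval z⁻¹ := by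
      rw [hRdef, fr_reverse_eval P hz0, hdeg]
    have h2 : R.eval z⁻¹ = (z ^ d)⁻¹ * P.eval z := by
      rw [hRdef, fr_reverse_eval P (inv_ne_zero hz0), hdeg, inv_inv, inv_pow]
    rw [hFdef]
    simp only [Polynomial.eval_sub, Polynomial.eval_pow, Polynomial.eval_X,
      Polynomial.eval_mul, h1, h2]
    have hzd : z ^ d ≠ 0 := pow_ne_zero _ hz0
    field_simp
    rw [← mul_pow, mul_one_div_cancel hz0, one_pow]
    ring
  -- real coefficients of F
  have hFmap : F.map (starRingEnd ℂ) = F := by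
    have hRreal : ∀ n : ℕ, (R.coeff n).im = 0 := by
      intro n
      rw [hRdef, Polynomial.coeff_reverse]
      exact hPreal _
    rw [hFdef]
    simp only [Polynomial.map_sub, Polynomial.map_pow, Polynomial.map_X,
      Polynomial.map_mul, hmapP, fr_map_conj R hRreal]
  -- the roots of F
  set M : Multiset ℂ := F.roots with hMdef
  have hsplitF : F = C F.leadingCoeff * (M.map fun r => X - C r).prod :=
    (IsAlgClosed.splits F).eq_prod_roots
  have hMcard : Multiset.card M = 2 * d := by
    rw [hMdef, ← hFdeg]
    exact Polynomial.splits_iff_card_roots.mp (IsAlgClosed.splits F)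
  have h0M : ∀ r ∈ M, r ≠ 0 := by
    intro r hr h0
    apply hF0
    have := Polynomial.isRoot_of_mem_roots hr
    rwa [h0] at this
  have hevalF : ∀ z : ℂ, F.eval z = F.leadingCoeff * (M.map fun r => z - r).prod := by
    intro z
    conv_lhs => rw [hsplitF]
    rw [Polynomial.eval_mul, Polynomial.eval_C, Polynomial.eval_multiset_prod,
      Multiset.map_map]
    congr 2
    apply Multiset.map_congr rfl
    intro r _
    simp
  -- inversion symmetry of the roots
  have hMinv : M.map (fun r : ℂ => r⁻¹) = M := by
    set G : Polynomial ℂ := ((M.map fun r : ℂ => r⁻¹).map fun r => X - C r).prod with hGdef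
    set v : ℂ := (M.map fun r : ℂ => -r).prod with hvdef
    have hv0 : v ≠ 0 := by
      rw [hvdef]
      apply Multiset.prod_ne_zero
      intro h0
      obtain ⟨r, hr, hr0⟩ := Multiset.mem_map.mp h0
      exact h0M r hr (by simpa using hr0.symm)
    have hGeval : ∀ z : ℂ, z ≠ 0 → F.eval z = (C (F.leadingCoeff * v) * G).eval z := by
      intro z hz0
      rw [Polynomial.eval_mul, Polynomial.eval_C, hGdef, Polynomial.eval_multiset_prod,
        Multiset.map_map, Multiset.map_map]
      have hfun' := hfun z hz0
      rw [hevalF z⁻¹] at hfun'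
      have hptwise : ∀ r ∈ M, z⁻¹ - r = -r * z⁻¹ * (z - r⁻¹) := by
        intro r hr
        have hr0 : r ≠ 0 := h0M r hr
        field_simp
        ring
      rw [Multiset.map_congr rfl hptwise] at hfun'
      have hsplitprod : (M.map fun r : ℂ => -r * z⁻¹ * (z - r⁻¹)).prod
          = v * (z⁻¹) ^ (2 * d) * (M.map fun r : ℂ => z - r⁻¹).prod := by
        rw [show (fun r : ℂ => -r * z⁻¹ * (z - r⁻¹))
            = fun r : ℂ => (-r * z⁻¹) * (z - r⁻¹) from rfl]
        rw [Multiset.prod_map_mul, Multiset.prod_map_mul]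
        have : (M.map fun _ : ℂ => z⁻¹).prod = (z⁻¹) ^ (2 * d) := by
          rw [Multiset.map_const', Multiset.prod_replicate, hMcard]
        rw [this, hvdef]
      rw [hsplitprod] at hfun'
      rw [hfun']
      have hzd : z ^ (2 * d) ≠ 0 := pow_ne_zero _ hz0
      field_simp
      rw [← mul_pow, mul_one_div_cancel hz0, one_pow, one_mul]
      congr 1
      apply Multiset.map_congr rfl
      intro r _
      simp
    have hFG : F = C (F.leadingCoeff * v) * G := by
      apply Polynomial.eq_of_infinite_eval_eq
      apply Set.Infinite.mono (s := ({0}ᶜ : Set ℂ))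
      · intro z hz
        exact hGeval z hz
      · exact Set.Finite.infinite_compl (Set.finite_singleton 0)
    have hcv : F.leadingCoeff * v ≠ 0 := mul_ne_zero hFleadne hv0
    calc M.map (fun r : ℂ => r⁻¹)
        = G.roots := (Polynomial.roots_multiset_prod_X_sub_C _).symm
      _ = (C (F.leadingCoeff * v) * G).roots := (Polynomial.roots_C_mul _ hcv).symm
      _ = M := by rw [← hFG]
  -- conjugation symmetry of the roots
  have hMconj : M.map (starRingEnd ℂ) = M := by
    have := (IsAlgClosed.splits F).roots_map_of_injective
      (starRingEnd ℂ).injective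
    rw [hFmap] at this
    rw [hMdef, ← this]
  -- even multiplicity on the circle
  have heven : ∀ w : ℂ, ‖w‖ = 1 → Even (M.count w) := by
    intro w hw
    rw [hMdef, Polynomial.count_roots]
    apply fr_even_mult F hFne d w hw
    intro z hz
    refine ⟨1 - ‖P.eval z‖ ^ 2, ?_, hcirc z hz⟩
    have h1 := hP z hz
    have h2 : (0:ℝ) ≤ ‖P.eval z‖ := norm_nonneg _
    nlinarith
  -- partition of the roots
  set σfun : ℂ → ℂ := fun r => ((starRingEnd ℂ) r)⁻¹ with hσdef
  have hMσ : M.map σfun = M := by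
    have hcomp : σfun = (fun r : ℂ => r⁻¹) ∘ (starRingEnd ℂ) := rfl
    rw [hcomp, ← Multiset.map_map, hMconj, hMinv]
  set Mout := M.filter (fun r => 1 < ‖r‖) with hMoutdef
  set Mcirc := M.filter (fun r => ‖r‖ = 1) with hMcircdef
  set Min := M.filter (fun r => ‖r‖ < 1) with hMindef
  have hpart : M = Mout + Mcirc + Min := by
    rw [hMoutdef, hMcircdef, hMindef]
    ext r
    simp only [Multiset.count_add, Multiset.count_filter]
    rcases lt_trichotomy (‖r‖) 1 with h | h | h
    · rw [if_neg (by linarith), if_neg (by linarith), if_pos h]; omega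
    · rw [if_neg (by linarith), if_pos h, if_neg (by linarith)]; omega
    · rw [if_pos h, if_neg (by linarith), if_neg (by linarith)]; omega
  have habsσ : ∀ r : ℂ, ‖σfun r‖ = (‖r‖)⁻¹ := by
    intro r
    rw [hσdef]
    simp [norm_inv]
  have hMinσ : Min = Mout.map σfun := by
    have h1 : Min = (M.map σfun).filter (fun r => ‖r‖ < 1) := by
      rw [hMσ]
    rw [h1, Multiset.filter_map]
    rw [hMoutdef]
    congr 1
    apply Multiset.filter_congr
    intro r hr
    have hr0 : ‖r‖ ≠ 0 := fun h =>
      h0M r hr (by simpa using (norm_eq_zero.mp h))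
    have hrpos : 0 < ‖r‖ := lt_of_le_of_ne (norm_nonneg _) (Ne.symm hr0)
    simp only [Function.comp_apply, habsσ r]
    exact inv_lt_one₀ hrpos
  have hcirceven : ∀ w : ℂ, Even (Mcirc.count w) := by
    intro w
    by_cases hw : ‖w‖ = 1
    · rw [hMcircdef, Multiset.count_filter, if_pos hw]; exact heven w hw
    · rw [hMcircdef, Multiset.count_filter, if_neg hw]; exact Even.zero
  obtain ⟨Nc, hNc, hNccount⟩ := fr_half_multiset Mcirc hcirceven
  have hNcmem : ∀ r ∈ Nc, ‖r‖ = 1 := by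
    intro r hr
    have : r ∈ Mcirc := by rw [← hNc]; exact Multiset.mem_add.mpr (Or.inl hr)
    rw [hMcircdef] at this
    exact (Multiset.mem_filter.mp this).2
  have hNcσ : Nc.map σfun = Nc := by
    have hid : ∀ r ∈ Nc, σfun r = id r := by
      intro r hr
      have h1 : ‖r‖ = 1 := hNcmem r hr
      have h2 : r * (starRingEnd ℂ) r = 1 := by
        rw [Complex.mul_conj, Complex.normSq_eq_norm_sq, h1]; norm_num
      rw [hσdef]
      exact inv_eq_of_mul_eq_one_left h2
    rw [Multiset.map_congr rfl hid, Multiset.map_id]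
  have hconjcount : ∀ w : ℂ, M.count ((starRingEnd ℂ) w) = M.count w := by
    intro w
    conv_lhs => rw [← hMconj]
    exact Multiset.count_map_eq_count' _ _ (starRingEnd ℂ).injective w
  have hNcconj : Nc.map (starRingEnd ℂ) = Nc := by
    have hNccnt2 : ∀ w : ℂ, Nc.count ((starRingEnd ℂ) w) = Nc.count w := by
      intro w
      rw [hNccount, hNccount, hMcircdef, Multiset.count_filter, Multiset.count_filter]
      have habs : ‖(starRingEnd ℂ) w‖ = ‖w‖ := Complex.norm_conj w
      by_cases hw : ‖w‖ = 1
      · rw [if_pos hw, if_pos (by rw [habs]; exact hw), hconjcount]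
      · rw [if_neg hw, if_neg (by rw [habs]; exact hw)]
    apply Multiset.ext.mpr
    intro w
    have := Multiset.count_map_eq_count' (starRingEnd ℂ) Nc (starRingEnd ℂ).injective
      ((starRingEnd ℂ) w)
    rw [Complex.conj_conj] at this
    rw [this, hNccnt2]
  have hMoutconj : Mout.map (starRingEnd ℂ) = Mout := by
    apply Multiset.ext.mpr
    intro w
    have := Multiset.count_map_eq_count' (starRingEnd ℂ) Mout (starRingEnd ℂ).injective
      ((starRingEnd ℂ) w)
    rw [Complex.conj_conj] at this
    rw [this, hMoutdef, Multiset.count_filter, Multiset.count_filter]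
    have habs : ‖(starRingEnd ℂ) w‖ = ‖w‖ := Complex.norm_conj w
    by_cases hw : 1 < ‖w‖
    · rw [if_pos hw, if_pos (by rw [habs]; exact hw), hconjcount]
    · rw [if_neg hw, if_neg (by rw [habs]; exact hw)]
  set N := Mout + Nc with hNdef
  have hNM : N + N.map σfun = M := by
    calc N + N.map σfun = Mout + Nc + (Mout.map σfun + Nc.map σfun) := by
          rw [hNdef, Multiset.map_add]
      _ = Mout + (Nc + Nc) + Min := by rw [hNcσ, ← hMinσ]; ac_rfl
      _ = M := by rw [hNc, hpart]
  have hNcard : Multiset.card N = d := by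
    have hc := congrArg Multiset.card hNM
    rw [Multiset.card_add, Multiset.card_map, hMcard] at hc
    omega
  have hNr1 : ∀ r ∈ N, 1 ≤ ‖r‖ := by
    intro r hr
    rcases Multiset.mem_add.mp hr with h | h
    · rw [hMoutdef] at h
      exact le_of_lt (Multiset.mem_filter.mp h).2
    · exact le_of_eq (hNcmem r h).symm
  have hNr0 : ∀ r ∈ N, r ≠ 0 := by
    intro r hr h0
    have := hNr1 r hr
    rw [h0, norm_zero] at this
    linarith
  have hNconj : N.map (starRingEnd ℂ) = N := by
    rw [hNdef, Multiset.map_add, hMoutconj, hNcconj]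
  -- the complementary polynomial (up to normalization)
  set Q0 : Polynomial ℂ := (N.map fun r => X - C r).prod with hQ0def
  have hQ0eval : ∀ z : ℂ, Q0.eval z = (N.map fun r => z - r).prod := by
    intro z
    rw [hQ0def, Polynomial.eval_multiset_prod, Multiset.map_map]
    congr 1
    apply Multiset.map_congr rfl
    intro r _
    simp
  have hQ0deg : Q0.natDegree = d := by
    rw [hQ0def, Polynomial.natDegree_multiset_prod_X_sub_C_eq_card, hNcard]
  have hQ0map : Q0.map (starRingEnd ℂ) = Q0 := by
    rw [hQ0def, Polynomial.map_multiset_prod, Multiset.map_map]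
    have hcg : ∀ r ∈ N, (Polynomial.map (starRingEnd ℂ) ∘ fun r : ℂ => X - C r) r
        = ((fun r : ℂ => X - C r) ∘ (starRingEnd ℂ)) r := by
      intro r _
      simp
    rw [Multiset.map_congr rfl hcg, ← Multiset.map_map, hNconj]
  have hQ0real : ∀ n : ℕ, (Q0.coeff n).im = 0 := by
    intro n
    have h := congrArg (fun p : Polynomial ℂ => p.coeff n) hQ0map
    simp only [Polynomial.coeff_map] at h
    exact Complex.conj_eq_iff_im.mp h
  -- constants
  set ρ : ℝ := (N.map fun r => ‖r‖).prod with hρdef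
  have hρpos : 0 < ρ := by
    rw [hρdef]
    apply Multiset.prod_pos
    intro x hx
    obtain ⟨r, hr, rfl⟩ := Multiset.mem_map.mp hx
    have := hNr1 r hr
    linarith
  set K : ℝ := ‖F.leadingCoeff‖ / ρ with hKdef
  have hKpos : 0 < K := div_pos (norm_pos_iff.mpr hFleadne) hρpos
  -- the key identity on the circle
  have hkey : ∀ z : ℂ, ‖z‖ = 1 →
      1 - ‖P.eval z‖ ^ 2 = K * ‖Q0.eval z‖ ^ 2 := by
    intro z hz
    have h1 : ‖F.eval z‖ = 1 - ‖P.eval z‖ ^ 2 := by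
      have h1a := hP z hz
      have h1b : (0:ℝ) ≤ ‖P.eval z‖ := norm_nonneg _
      rw [hcirc z hz, norm_mul, norm_pow, hz, one_pow, one_mul,
        Complex.norm_of_nonneg (by nlinarith : (0:ℝ) ≤ 1 - ‖P.eval z‖ ^ 2)]
    have h2 : ‖F.eval z‖
        = ‖F.leadingCoeff‖ * (M.map fun r => ‖z - r‖).prod := by
      rw [hevalF z, norm_mul]
      congr 1
      rw [← normHom_apply, map_multiset_prod, Multiset.map_map]
      rfl
    have habsQ : ‖Q0.eval z‖ = (N.map fun r => ‖z - r‖).prod := by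
      rw [hQ0eval z, ← normHom_apply, map_multiset_prod, Multiset.map_map]
      rfl
    have h3 : (M.map fun r => ‖z - r‖).prod
        = (N.map fun r => ‖z - r‖).prod ^ 2 / ρ := by
      conv_lhs => rw [← hNM]
      rw [Multiset.map_add, Multiset.prod_add, Multiset.map_map]
      have hpt : ∀ r ∈ N, ((fun r : ℂ => ‖z - r‖) ∘ σfun) r
          = ‖z - r‖ * (‖r‖)⁻¹ := by
        intro r hr
        have h := fr_abs_pt hz (hNr0 r hr)
        simp only [Function.comp_apply, hσdef]
        rw [h, div_eq_mul_inv]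
      rw [Multiset.map_congr rfl hpt, Multiset.prod_map_mul, Multiset.prod_map_inv]
      rw [← hρdef, sq, div_eq_mul_inv]
      ring
    rw [← h1, h2, h3, ← habsQ, hKdef]
    field_simp
  -- conclusion
  set t : ℝ := Real.sqrt K with htdef
  have htpos : 0 < t := Real.sqrt_pos.mpr hKpos
  have ht2 : t ^ 2 = K := Real.sq_sqrt hKpos.le
  have htC : ((t : ℂ)) ≠ 0 := by exact_mod_cast htpos.ne'
  refine ⟨C (t : ℂ) * Q0, ?_, ?_, ?_, ?_⟩
  · intro n
    rw [Polynomial.coeff_C_mul]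
    simp [Complex.mul_im, hQ0real n]
  · rw [Polynomial.natDegree_C_mul htC, hQ0deg]
  · intro z hz
    rw [Polynomial.eval_mul, Polynomial.eval_C]
    apply mul_ne_zero htC
    rw [hQ0eval]
    apply Multiset.prod_ne_zero
    intro h0
    obtain ⟨r, hr, hr0⟩ := Multiset.mem_map.mp h0
    have h1 := hNr1 r hr
    have hzr : z = r := sub_eq_zero.mp hr0
    rw [hzr] at hz
    linarith
  · intro z hz
    have hk := hkey z hz
    rw [Polynomial.eval_mul, Polynomial.eval_C, norm_mul, mul_pow, Complex.norm_real, Real.norm_eq_abs,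
      _root_.abs_of_pos htpos, ht2]
    linarith
end

section
/- Let d ≥ 1 and let P, Q ∈ ℂ[z] with deg P = deg Q = d, with monomial coefficients pₖ, qₖ for 0 ≤ k ≤ d (and pₖ = qₖ = 0 for k < 0 or k > d). Then (1/√(2d+1)) · Φ(P,Q) ≤ Φ̃(P,Q) ≤ √(2d+1) · Φ(P,Q). -/
/-- The coefficient sequence of a polynomial extended by zero to all integer indices. -/
noncomputable def coeffExt (P : Polynomial ℂ) (n : ℤ) : ℂ :=
  if 0 ≤ n then P.coeff n.toNat else 0

/-- The complementarity error `Φ(P,Q) = sup_{z ∈ 𝕋} ||P(z)|² + |Q(z)|² − 1|`. -/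
noncomputable def PhiErr (P Q : Polynomial ℂ) : ℝ :=
  ⨆ z : {z : ℂ // ‖z‖ = 1},
    |‖P.eval z.1‖ ^ 2 + ‖Q.eval z.1‖ ^ 2 - 1|

/-- The loss function
`Φ̃(P,Q) = (Σ_{n=−d}^{d} |Σ_{m=0}^{d} (p_{n+m} conj(p_m) + q_{n+m} conj(q_m)) − δ_{n,0}|²)^{1/2}`. -/
noncomputable def PhiLoss (d : ℕ) (P Q : Polynomial ℂ) : ℝ :=
  Real.sqrt (∑ n ∈ Finset.Icc (-(d : ℤ)) (d : ℤ),
    ‖((∑ m ∈ Finset.range (d + 1),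
        (coeffExt P (n + m) * starRingEnd ℂ (coeffExt P m) +
          coeffExt Q (n + m) * starRingEnd ℂ (coeffExt Q m))) -
      if n = 0 then 1 else 0)‖ ^ 2)

/-! ### Auxiliary material -/

/-- The Fourier coefficients of `|P|² + |Q|² − 1` on the circle. -/
noncomputable def ccoef (d : ℕ) (P Q : Polynomial ℂ) (n : ℤ) : ℂ :=
  (∑ m ∈ Finset.range (d + 1),
      (coeffExt P (n + m) * starRingEnd ℂ (coeffExt P m) +
        coeffExt Q (n + m) * starRingEnd ℂ (coeffExt Q m))) -
    if n = 0 then 1 else 0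

lemma icc_eq_map (d : ℕ) :
    Finset.Icc (0:ℤ) (d:ℤ) = Finset.map ⟨Nat.cast, Nat.cast_injective⟩ (Finset.range (d+1)) := by
  ext x
  simp only [Finset.mem_Icc, Finset.mem_map, Finset.mem_range, Function.Embedding.coeFn_mk]
  constructor
  · rintro ⟨h0, h1⟩; exact ⟨x.toNat, by omega, by omega⟩
  · rintro ⟨a, ha, rfl⟩; omega

lemma eval_shift (d : ℕ) (P : Polynomial ℂ) (hP : P.natDegree ≤ d) {z : ℂ}
    (m : ℕ) (hm : m < d + 1) :
    P.eval z = ∑ k ∈ Finset.Icc (-(d:ℤ)) (d:ℤ), coeffExt P (k + m) * z ^ (k + (m:ℤ)) := by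
  have h1 : P.eval z = ∑ n ∈ Finset.range (d+1), P.coeff n * z ^ n :=
    Polynomial.eval_eq_sum_range' (by omega) z
  have h2 : ∑ j ∈ Finset.Icc (0:ℤ) (d:ℤ), coeffExt P j * z ^ j
      = ∑ n ∈ Finset.range (d+1), P.coeff n * z ^ n := by
    rw [icc_eq_map, Finset.sum_map]
    refine Finset.sum_congr rfl fun n _ => ?_
    simp [coeffExt, zpow_natCast]
  have h3 : ∑ j ∈ Finset.Icc (0:ℤ) (d:ℤ), coeffExt P j * z ^ j
      = ∑ j ∈ Finset.Icc (-(d:ℤ) + m) ((d:ℤ) + m), coeffExt P j * z ^ j := by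
    apply Finset.sum_subset
    · intro x hx; simp only [Finset.mem_Icc] at *; omega
    · intro x hx hnx
      simp only [Finset.mem_Icc, not_and_or, not_le] at hx hnx
      have : coeffExt P x = 0 := by
        rcases hnx with h | h
        · simp only [coeffExt, if_neg (by omega : ¬ (0:ℤ) ≤ x)]
        · simp only [coeffExt, if_pos (by omega : (0:ℤ) ≤ x)]
          exact Polynomial.coeff_eq_zero_of_natDegree_lt (by omega)
      simp [this]
  have h4 : ∑ k ∈ Finset.Icc (-(d:ℤ)) (d:ℤ), coeffExt P (k + m) * z ^ (k + (m:ℤ))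
      = ∑ j ∈ Finset.Icc (-(d:ℤ) + m) ((d:ℤ) + m), coeffExt P j * z ^ j := by
    rw [← Finset.map_add_right_Icc, Finset.sum_map]
    rfl
  rw [h1, ← h2, h3, h4]

lemma conj_inv1 {z : ℂ} (hz : ‖z‖ = 1) : (starRingEnd ℂ) z = z⁻¹ := by
  have h : z * (starRingEnd ℂ) z = 1 := by
    rw [Complex.mul_conj, Complex.normSq_eq_norm_sq, hz]; norm_num
  exact (inv_eq_of_mul_eq_one_right h).symm

lemma conj_eval (d : ℕ) (P : Polynomial ℂ) (hP : P.natDegree ≤ d) {z : ℂ}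
    (hz : ‖z‖ = 1) :
    (starRingEnd ℂ) (P.eval z) =
      ∑ m ∈ Finset.range (d+1), (starRingEnd ℂ) (coeffExt P m) * z ^ (-(m:ℤ)) := by
  have hz0 : z ≠ 0 := by intro h; rw [h] at hz; simp at hz
  rw [Polynomial.eval_eq_sum_range' (show P.natDegree < d+1 by omega) z, map_sum]
  refine Finset.sum_congr rfl fun m _ => ?_
  rw [map_mul, map_pow, conj_inv1 hz]
  simp [coeffExt, zpow_neg, zpow_natCast]

lemma prod_expand (d : ℕ) (P : Polynomial ℂ) (hP : P.natDegree ≤ d) {z : ℂ}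
    (hz : ‖z‖ = 1) :
    P.eval z * (starRingEnd ℂ) (P.eval z) =
      ∑ k ∈ Finset.Icc (-(d:ℤ)) (d:ℤ),
        (∑ m ∈ Finset.range (d+1), coeffExt P (k + m) * (starRingEnd ℂ) (coeffExt P m)) * z ^ k := by
  have hz0 : z ≠ 0 := by intro h; rw [h] at hz; simp at hz
  rw [conj_eval d P hP hz, Finset.mul_sum]
  calc ∑ m ∈ Finset.range (d+1), P.eval z * ((starRingEnd ℂ) (coeffExt P m) * z ^ (-(m:ℤ)))
      = ∑ m ∈ Finset.range (d+1), ∑ k ∈ Finset.Icc (-(d:ℤ)) (d:ℤ),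
          coeffExt P (k + m) * (starRingEnd ℂ) (coeffExt P m) * z ^ k := by
        refine Finset.sum_congr rfl fun m hm => ?_
        rw [eval_shift d P hP m (Finset.mem_range.mp hm), Finset.sum_mul]
        refine Finset.sum_congr rfl fun k _ => ?_
        rw [zpow_add₀ hz0, zpow_neg]
        have hzm : (z:ℂ) ^ (m:ℤ) ≠ 0 := zpow_ne_zero _ hz0
        field_simp
    _ = ∑ k ∈ Finset.Icc (-(d:ℤ)) (d:ℤ),
        (∑ m ∈ Finset.range (d+1), coeffExt P (k + m) * (starRingEnd ℂ) (coeffExt P m)) * z ^ k := by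
        rw [Finset.sum_comm]
        refine Finset.sum_congr rfl fun k _ => ?_
        rw [Finset.sum_mul]

lemma evalF (d : ℕ) (hd : 1 ≤ d) (P Q : Polynomial ℂ) (hP : P.natDegree ≤ d)
    (hQ : Q.natDegree ≤ d) {z : ℂ} (hz : ‖z‖ = 1) :
    ((‖P.eval z‖ ^ 2 + ‖Q.eval z‖ ^ 2 - 1 : ℝ) : ℂ) =
      ∑ n ∈ Finset.Icc (-(d:ℤ)) (d:ℤ), ccoef d P Q n * z ^ n := by
  have habsP : ((‖P.eval z‖ ^ 2 : ℝ) : ℂ) = P.eval z * (starRingEnd ℂ) (P.eval z) := by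
    rw [Complex.mul_conj]; norm_cast; exact Complex.sq_norm _
  have habsQ : ((‖Q.eval z‖ ^ 2 : ℝ) : ℂ) = Q.eval z * (starRingEnd ℂ) (Q.eval z) := by
    rw [Complex.mul_conj]; norm_cast; exact Complex.sq_norm _
  have h1 : ∑ n ∈ Finset.Icc (-(d:ℤ)) (d:ℤ), (if n = 0 then (1:ℂ) else 0) * z ^ n = 1 := by
    rw [Finset.sum_congr rfl (fun n _ => by rw [ite_mul, zero_mul, one_mul]),
      Finset.sum_ite_eq' (Finset.Icc (-(d:ℤ)) (d:ℤ)) 0 (fun n => z ^ n)]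
    rw [if_pos (by simp only [Finset.mem_Icc]; omega)]
    simp
  have hexp : ∑ n ∈ Finset.Icc (-(d:ℤ)) (d:ℤ), ccoef d P Q n * z ^ n
      = (∑ n ∈ Finset.Icc (-(d:ℤ)) (d:ℤ),
          (∑ m ∈ Finset.range (d+1), coeffExt P (n + m) * (starRingEnd ℂ) (coeffExt P m)) * z ^ n)
        + (∑ n ∈ Finset.Icc (-(d:ℤ)) (d:ℤ),
          (∑ m ∈ Finset.range (d+1), coeffExt Q (n + m) * (starRingEnd ℂ) (coeffExt Q m)) * z ^ n)
        - 1 := by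
    rw [← h1, ← Finset.sum_add_distrib, ← Finset.sum_sub_distrib]
    refine Finset.sum_congr rfl fun n _ => ?_
    rw [ccoef, Finset.sum_add_distrib]
    ring
  rw [hexp, ← prod_expand d P hP hz, ← prod_expand d Q hQ hz]
  rw [Complex.ofReal_sub, Complex.ofReal_add, Complex.ofReal_one, habsP, habsQ]

lemma orth (d : ℕ) (hd : 1 ≤ d) {ω : ℂ} (hω : IsPrimitiveRoot ω (2*d+1)) (k n : ℤ)
    (hk : k ∈ Finset.Icc (-(d:ℤ)) (d:ℤ)) (hn : n ∈ Finset.Icc (-(d:ℤ)) (d:ℤ)) :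
    ∑ j ∈ Finset.range (2*d+1), (ω ^ (k - n)) ^ j = if k = n then ((2*d+1 : ℕ) : ℂ) else 0 := by
  by_cases hkn : k = n
  · simp [hkn]
  · rw [if_neg hkn]
    have hζ1 : ω ^ (k - n) ≠ 1 := by
      intro h
      rw [hω.zpow_eq_one_iff_dvd] at h
      simp only [Finset.mem_Icc] at hk hn
      have habs : |k - n| < ((2*d+1 : ℕ) : ℤ) := by rw [abs_lt]; push_cast; omega
      have hpos : 0 < |k - n| := abs_pos.mpr (sub_ne_zero.mpr hkn)
      have hle := Int.le_of_dvd hpos ((dvd_abs _ _).mpr h)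
      omega
    have hζN : (ω ^ (k - n)) ^ (2*d+1) = 1 := by
      rw [← zpow_natCast (ω ^ (k-n)), ← zpow_mul, mul_comm, zpow_mul, zpow_natCast,
        hω.pow_eq_one, one_zpow]
    rw [geom_sum_eq hζ1, hζN, sub_self, zero_div]

lemma fourier_inv (d : ℕ) (hd : 1 ≤ d) {ω : ℂ} (hω : IsPrimitiveRoot ω (2*d+1))
    (c : ℤ → ℂ) (n : ℤ) (hn : n ∈ Finset.Icc (-(d:ℤ)) (d:ℤ)) :
    ((2*d+1 : ℕ) : ℂ) * c n =
      ∑ j ∈ Finset.range (2*d+1),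
        (∑ k ∈ Finset.Icc (-(d:ℤ)) (d:ℤ), c k * (ω ^ j) ^ k) * (ω ^ j) ^ (-n) := by
  have hω0 : ω ≠ 0 := hω.ne_zero (by omega)
  have step : ∀ j : ℕ, (∑ k ∈ Finset.Icc (-(d:ℤ)) (d:ℤ), c k * (ω ^ j) ^ k) * (ω ^ j) ^ (-n)
      = ∑ k ∈ Finset.Icc (-(d:ℤ)) (d:ℤ), c k * (ω ^ (k - n)) ^ j := by
    intro j
    rw [Finset.sum_mul]
    refine Finset.sum_congr rfl fun k _ => ?_
    rw [mul_assoc, ← zpow_add₀ (pow_ne_zero j hω0), ← zpow_natCast ω j, ← zpow_mul,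
      mul_comm ((j:ℤ)) (k + -n), zpow_mul, zpow_natCast]
    ring_nf
  symm
  calc ∑ j ∈ Finset.range (2*d+1),
        (∑ k ∈ Finset.Icc (-(d:ℤ)) (d:ℤ), c k * (ω ^ j) ^ k) * (ω ^ j) ^ (-n)
      = ∑ k ∈ Finset.Icc (-(d:ℤ)) (d:ℤ), c k * ∑ j ∈ Finset.range (2*d+1), (ω ^ (k - n)) ^ j := by
        rw [Finset.sum_congr rfl fun j _ => step j, Finset.sum_comm]
        exact Finset.sum_congr rfl fun k _ => by rw [Finset.mul_sum]
    _ = ((2*d+1 : ℕ) : ℂ) * c n := by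
        rw [Finset.sum_congr rfl fun k hk => by rw [orth d hd hω k n hk hn]]
        rw [Finset.sum_congr rfl fun k _ => by rw [mul_ite, mul_zero],
          Finset.sum_ite_eq' (Finset.Icc (-(d:ℤ)) (d:ℤ)) n (fun k => c k * ((2*d+1:ℕ):ℂ))]
        rw [if_pos hn]; ring

/-- **Equivalence of the complementarity error and the loss function** (Proposition 1):
`(1/√(2d+1)) Φ(P,Q) ≤ Φ̃(P,Q) ≤ √(2d+1) Φ(P,Q)` for polynomials `P, Q` of degree `d ≥ 1`. -/
theorem phi_loss_equivalence
    (d : ℕ) (hd : 1 ≤ d) (P Q : Polynomial ℂ)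
    (hPdeg : P.natDegree = d) (hQdeg : Q.natDegree = d) :
    (1 / Real.sqrt (2 * d + 1)) * PhiErr P Q ≤ PhiLoss d P Q ∧
      PhiLoss d P Q ≤ Real.sqrt (2 * d + 1) * PhiErr P Q := by
  have hP : P.natDegree ≤ d := hPdeg.le
  have hQ : Q.natDegree ≤ d := hQdeg.le
  set s := Finset.Icc (-(d:ℤ)) (d:ℤ) with hs
  set c := ccoef d P Q with hc
  set Φ := PhiErr P Q with hΦ
  have hLoss : PhiLoss d P Q = Real.sqrt (∑ n ∈ s, ‖c n‖ ^ 2) := rfl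
  -- basic facts about the circle
  haveI : Nonempty {z : ℂ // ‖z‖ = 1} := ⟨⟨1, by simp⟩⟩
  have hcs : IsCompact {z : ℂ | ‖z‖ = 1} := by
    have : {z : ℂ | ‖z‖ = 1} = Metric.sphere (0:ℂ) 1 := by
      ext z; simp [Complex.dist_eq]
    rw [this]; exact isCompact_sphere 0 1
  haveI : CompactSpace {z : ℂ // ‖z‖ = 1} := isCompact_iff_compactSpace.mp hcs
  have hcont : Continuous fun z : {z : ℂ // ‖z‖ = 1} =>
      |‖P.eval z.1‖ ^ 2 + ‖Q.eval z.1‖ ^ 2 - 1| := by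
    have hp : Continuous fun z : {z : ℂ // ‖z‖ = 1} => ‖P.eval z.1‖ :=
      continuous_norm.comp (P.continuous.comp continuous_subtype_val)
    have hq : Continuous fun z : {z : ℂ // ‖z‖ = 1} => ‖Q.eval z.1‖ :=
      continuous_norm.comp (Q.continuous.comp continuous_subtype_val)
    exact (((hp.pow 2).add (hq.pow 2)).sub continuous_const).abs
  have hbdd : BddAbove (Set.range fun z : {z : ℂ // ‖z‖ = 1} =>
      |‖P.eval z.1‖ ^ 2 + ‖Q.eval z.1‖ ^ 2 - 1|) :=
    (isCompact_range hcont).bddAbove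
  have hΦ0 : 0 ≤ Φ := Real.iSup_nonneg fun z => abs_nonneg _
  have hval : ∀ z : ℂ, ‖z‖ = 1 →
      |‖P.eval z‖ ^ 2 + ‖Q.eval z‖ ^ 2 - 1| ≤ Φ := by
    intro z hz
    exact le_ciSup hbdd (⟨z, hz⟩ : {z : ℂ // ‖z‖ = 1})
  -- the primitive root
  set N := 2*d+1 with hN
  set ω : ℂ := Complex.exp (2 * Real.pi * Complex.I / N) with hωdef
  have hω : IsPrimitiveRoot ω N := Complex.isPrimitiveRoot_exp N (by omega)
  have habsω : ∀ j : ℕ, ‖ω ^ j‖ = 1 := by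
    intro j
    have h1 : ‖ω‖ = 1 := by
      rw [hωdef, show (2 * Real.pi * Complex.I / N : ℂ)
          = ((2 * Real.pi / N : ℝ) : ℂ) * Complex.I by push_cast; ring]
      exact Complex.norm_exp_ofReal_mul_I _
    rw [norm_pow, h1, one_pow]
  -- bound 1 : each coefficient is at most Φ
  have hcoef_le : ∀ n ∈ s, ‖c n‖ ≤ Φ := by
    intro n hn
    have hinv := fourier_inv d hd hω c n hn
    have hNr : (0:ℝ) < (N:ℝ) := by positivity
    have key : (N:ℝ) * ‖c n‖ ≤ (N:ℝ) * Φ := by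
      calc (N:ℝ) * ‖c n‖ = ‖((N:ℕ):ℂ) * c n‖ := by
            rw [norm_mul, Complex.norm_natCast]
        _ = ‖∑ j ∈ Finset.range N,
              (∑ k ∈ s, c k * (ω ^ j) ^ k) * (ω ^ j) ^ (-n)‖ := by rw [hinv]
        _ ≤ ∑ j ∈ Finset.range N,
              ‖(∑ k ∈ s, c k * (ω ^ j) ^ k) * (ω ^ j) ^ (-n)‖ :=
            norm_sum_le _ _
        _ ≤ ∑ j ∈ Finset.range N, Φ := by
            refine Finset.sum_le_sum fun j _ => ?_
            rw [norm_mul, norm_zpow, habsω j, one_zpow, mul_one]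
            have hF : ∑ k ∈ s, c k * (ω ^ j) ^ k =
                ((‖P.eval (ω ^ j)‖ ^ 2 + ‖Q.eval (ω ^ j)‖ ^ 2 - 1 : ℝ) : ℂ) :=
              (evalF d hd P Q hP hQ (habsω j)).symm
            rw [hF, Complex.norm_real, Real.norm_eq_abs]
            exact hval _ (habsω j)
        _ = (N:ℝ) * Φ := by rw [Finset.sum_const, Finset.card_range, nsmul_eq_mul]
    exact le_of_mul_le_mul_left (by linarith [key]) hNr
  -- bound 2 : Φ is at most the sum of the coefficient moduli
  have hsup_le : Φ ≤ ∑ n ∈ s, ‖c n‖ := by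
    rw [hΦ, PhiErr]
    apply ciSup_le
    rintro ⟨z, hz⟩
    have hF := evalF d hd P Q hP hQ hz
    have hz0 : z ≠ 0 := by intro h; rw [h] at hz; simp at hz
    calc |‖P.eval z‖ ^ 2 + ‖Q.eval z‖ ^ 2 - 1|
        = ‖((‖P.eval z‖ ^ 2 + ‖Q.eval z‖ ^ 2 - 1 : ℝ) : ℂ)‖ := by
          rw [Complex.norm_real, Real.norm_eq_abs]
      _ = ‖∑ n ∈ s, c n * z ^ n‖ := by rw [hF]
      _ ≤ ∑ n ∈ s, ‖c n * z ^ n‖ := norm_sum_le _ _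
      _ = ∑ n ∈ s, ‖c n‖ := by
          refine Finset.sum_congr rfl fun n _ => ?_
          rw [norm_mul, norm_zpow, hz, one_zpow, mul_one]
  -- counting
  have hcard : s.card = N := by
    rw [hs, Int.card_Icc]
    omega
  have hcast : ((N:ℕ) : ℝ) = 2 * (d:ℝ) + 1 := by rw [hN]; push_cast; ring
  have hS0 : (0:ℝ) ≤ ∑ n ∈ s, ‖c n‖ ^ 2 :=
    Finset.sum_nonneg fun n _ => sq_nonneg _
  have hsqrtN : Real.sqrt (2 * (d:ℝ) + 1) = Real.sqrt (N:ℝ) := by rw [hcast]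
  have hNpos : (0:ℝ) < Real.sqrt (N:ℝ) := Real.sqrt_pos.mpr (by positivity)
  constructor
  · -- left inequality
    rw [hLoss, hsqrtN, one_div_mul_eq_div, div_le_iff₀ hNpos]
    have hCS : (∑ n ∈ s, ‖c n‖) ^ 2 ≤ (N:ℝ) * ∑ n ∈ s, ‖c n‖ ^ 2 := by
      have hcs2 := Finset.sum_mul_sq_le_sq_mul_sq s (fun _ => (1:ℝ)) (fun n => ‖c n‖)
      have e1 : ∑ n ∈ s, (1:ℝ) * ‖c n‖ = ∑ n ∈ s, ‖c n‖ :=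
        Finset.sum_congr rfl fun n _ => one_mul _
      have e2 : ∑ n ∈ s, (1:ℝ) ^ 2 = (N:ℝ) := by
        rw [Finset.sum_const, hcard, nsmul_eq_mul, one_pow, mul_one]
      rw [e1, e2] at hcs2
      exact hcs2
    have hA : ∑ n ∈ s, ‖c n‖
        ≤ Real.sqrt (N:ℝ) * Real.sqrt (∑ n ∈ s, ‖c n‖ ^ 2) := by
      rw [← Real.sqrt_mul (Nat.cast_nonneg N)]
      rw [Real.le_sqrt (Finset.sum_nonneg fun n _ => norm_nonneg _)
        (mul_nonneg (Nat.cast_nonneg N) hS0)]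
      exact hCS
    calc Φ ≤ ∑ n ∈ s, ‖c n‖ := hsup_le
      _ ≤ Real.sqrt (N:ℝ) * Real.sqrt (∑ n ∈ s, ‖c n‖ ^ 2) := hA
      _ = Real.sqrt (∑ n ∈ s, ‖c n‖ ^ 2) * Real.sqrt (N:ℝ) := by ring
  · -- right inequality
    rw [hLoss, hsqrtN]
    have hsum : ∑ n ∈ s, ‖c n‖ ^ 2 ≤ (N:ℝ) * Φ ^ 2 := by
      calc ∑ n ∈ s, ‖c n‖ ^ 2 ≤ ∑ n ∈ s, Φ ^ 2 :=
            Finset.sum_le_sum fun n hn => by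
              have := hcoef_le n hn
              nlinarith [norm_nonneg (c n)]
        _ = (N:ℝ) * Φ ^ 2 := by rw [Finset.sum_const, hcard, nsmul_eq_mul]
    calc Real.sqrt (∑ n ∈ s, ‖c n‖ ^ 2)
        ≤ Real.sqrt ((N:ℝ) * Φ ^ 2) := Real.sqrt_le_sqrt hsum
      _ = Real.sqrt (N:ℝ) * Φ := by
          rw [Real.sqrt_mul (Nat.cast_nonneg N), Real.sqrt_sq hΦ0]
end

section
/- Let d ≥ 1, δ ∈ (0,1), and let P ∈ ℂ[z] with deg P = d and |P(z)| ≤ 1 − δ for all z ∈ 𝕋. Then for every z ∈ ℂ with (1−δ)^{1/d} ≤ |z| ≤ (1−δ)^{−1/d}, one has |P(z) · P*(1/z)| ≤ 1 − δ. -/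
open Polynomial

/-- Maximum modulus principle for polynomials on the closed unit disk. -/
lemma poly_maxmod (R : Polynomial ℂ) (C : ℝ)
    (h : ∀ z : ℂ, ‖z‖ = 1 → ‖R.eval z‖ ≤ C) :
    ∀ z : ℂ, ‖z‖ ≤ 1 → ‖R.eval z‖ ≤ C := by
  intro z hz
  have := Complex.norm_le_of_forall_mem_frontier_norm_le (U := Metric.ball (0 : ℂ) 1)
    Metric.isBounded_ball
    (f := fun w => R.eval w)
    ((R.differentiable).diffContOnCl)
    (fun w hw => by
      rw [frontier_ball (0 : ℂ) one_ne_zero] at hw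
      simp only [Metric.mem_sphere, dist_zero_right] at hw
      exact h w (by simpa using hw))
    (z := z)
    (by
      rw [closure_ball (0 : ℂ) one_ne_zero]
      simpa [Metric.mem_closedBall, dist_zero_right] using hz)
  simpa using this

/-- **Bound on `|P(z)P*(1/z)|` in the annulus `A(r_δ)`** (Lemma 2). If `deg P = d ≥ 1`,
`δ ∈ (0,1)`, and `|P| ≤ 1 − δ` on the unit circle, then
`|P(z)P*(1/z)| ≤ 1 − δ` for all `z` with `(1−δ)^{1/d} ≤ |z| ≤ (1−δ)^{−1/d}`. -/
theorem annulus_product_bound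
    (d : ℕ) (hd : 1 ≤ d) (δ : ℝ) (hδ : δ ∈ Set.Ioo (0 : ℝ) 1)
    (P : Polynomial ℂ) (hdeg : P.natDegree = d)
    (hP : ∀ z : ℂ, ‖z‖ = 1 → ‖P.eval z‖ ≤ 1 - δ) :
    ∀ z : ℂ, (1 - δ) ^ (1 / (d : ℝ)) ≤ ‖z‖ →
      ‖z‖ ≤ (1 - δ) ^ (-(1 / (d : ℝ))) →
      ‖P.eval z * (P.map (starRingEnd ℂ)).eval z⁻¹‖ ≤ 1 - δ := by
  have hδ0 : 0 < δ := hδ.1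
  have h1δ : 0 < 1 - δ := by linarith [hδ.2]
  have hdne : (d : ℝ) ≠ 0 := Nat.cast_ne_zero.mpr (by omega)
  set c := starRingEnd ℂ
  set Pc := P.map c with hPc
  -- conjugation identity
  have hconj : ∀ w : ℂ, Pc.eval (c w) = c (P.eval w) := by
    intro w
    rw [hPc, eval_map, eval₂_at_apply]
  have hdegc : Pc.natDegree ≤ d := hdeg ▸ natDegree_map_le
  set Q := reflect d Pc with hQ
  -- key polynomial identity away from 0
  have hkey : ∀ z : ℂ, z ≠ 0 → Q.eval z = Pc.eval z⁻¹ * z ^ d := by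
    intro z hz
    haveI : Invertible (z⁻¹) := invertibleOfNonzero (inv_ne_zero hz)
    have hid : ∀ (p : Polynomial ℂ) (x : ℂ), eval₂ (RingHom.id ℂ) x p = eval x p :=
      fun p x => rfl
    have h0 := eval₂_reflect_mul_pow (RingHom.id ℂ) (z⁻¹) d Pc hdegc
    rw [invOf_eq_inv, inv_inv, hid, hid] at h0
    have hz' : (z : ℂ) ^ d ≠ 0 := pow_ne_zero _ hz
    rw [hQ, eq_comm, ← h0, mul_assoc, inv_pow, inv_mul_cancel₀ hz', mul_one]
  set R := P * Q with hR
  -- bound on the circle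
  have hcirc : ∀ z : ℂ, ‖z‖ = 1 → ‖R.eval z‖ ≤ (1 - δ) ^ 2 := by
    intro z hz
    have hz0 : z ≠ 0 := by
      intro h; rw [h] at hz; simp at hz
    have hinv : z⁻¹ = c z := Complex.inv_eq_conj hz
    have : R.eval z = P.eval z * (Pc.eval z⁻¹ * z ^ d) := by
      rw [hR, eval_mul, hkey z hz0]
    rw [this, norm_mul, norm_mul, norm_pow]
    rw [hinv, hconj]
    have hPz := hP z hz
    have : ‖c (P.eval z)‖ = ‖P.eval z‖ := Complex.norm_conj _
    rw [this, hz, one_pow, mul_one, sq]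
    exact mul_le_mul hPz hPz (norm_nonneg _) (le_of_lt h1δ)
  have hdisk := poly_maxmod R ((1 - δ) ^ 2) hcirc
  -- case |z| ≤ 1
  have hcase : ∀ z : ℂ, z ≠ 0 → 1 - δ ≤ ‖z‖ ^ d → ‖z‖ ≤ 1 →
      ‖P.eval z * Pc.eval z⁻¹‖ ≤ 1 - δ := by
    intro z hz0 hlow hup
    have hRz : R.eval z = P.eval z * Pc.eval z⁻¹ * z ^ d := by
      rw [hR, eval_mul, hkey z hz0]; ring
    have h1 : ‖P.eval z * Pc.eval z⁻¹‖ * ‖z‖ ^ d ≤ (1 - δ) ^ 2 := by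
      have := hdisk z hup
      rw [hRz, norm_mul, norm_pow] at this
      exact this
    nlinarith [norm_nonneg (P.eval z * Pc.eval z⁻¹), norm_nonneg z]
  -- main argument
  intro z hlow hup
  have hr0 : 0 < (1 - δ) ^ (1 / (d : ℝ)) := Real.rpow_pos_of_pos h1δ _
  have hz0 : z ≠ 0 := by
    intro h
    rw [h] at hlow
    simp only [norm_zero] at hlow
    linarith [hr0]
  have hrpow : ((1 - δ) ^ (1 / (d : ℝ))) ^ d = 1 - δ := by
    rw [← Real.rpow_natCast ((1 - δ) ^ (1 / (d : ℝ))) d, ← Real.rpow_mul (le_of_lt h1δ)]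
    rw [one_div_mul_cancel hdne, Real.rpow_one]
  rcases le_or_gt ‖z‖ 1 with hle | hgt
  · apply hcase z hz0 _ hle
    calc 1 - δ = ((1 - δ) ^ (1 / (d : ℝ))) ^ d := hrpow.symm
    _ ≤ ‖z‖ ^ d := pow_le_pow_left₀ (le_of_lt hr0) hlow d
  · -- reflect to w = (conj z)⁻¹
    set w := (c z)⁻¹ with hw
    have hcz : c z ≠ 0 := by simpa using hz0
    have hw0 : w ≠ 0 := inv_ne_zero hcz
    have habsw : ‖w‖ = ‖z‖⁻¹ := by
      rw [hw, norm_inv, Complex.norm_conj]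
    have hwle : ‖w‖ ≤ 1 := by
      rw [habsw]
      exact inv_le_one_of_one_le₀ (le_of_lt hgt)
    have hwlow : (1 - δ) ^ (1 / (d : ℝ)) ≤ ‖w‖ := by
      rw [habsw]
      rw [Real.rpow_neg (le_of_lt h1δ)] at hup
      have hz0' : 0 < ‖z‖ := norm_pos_iff.mpr hz0
      exact (le_inv_comm₀ hr0 hz0').mpr hup
    -- symmetry of the product
    have hsym : ‖P.eval z * Pc.eval z⁻¹‖
        = ‖P.eval w * Pc.eval w⁻¹‖ := by
      have h1 : Pc.eval z⁻¹ = c (P.eval w) := by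
        have : z⁻¹ = c w := by
          rw [hw, map_inv₀, Complex.conj_conj]
        rw [this, hconj]
      have h2 : Pc.eval w⁻¹ = c (P.eval z) := by
        have : w⁻¹ = c z := by rw [hw, inv_inv]
        rw [this, hconj]
      rw [h1, h2, norm_mul, norm_mul, Complex.norm_conj, Complex.norm_conj]
      ring
    rw [hsym]
    apply hcase w hw0 _ hwle
    calc 1 - δ = ((1 - δ) ^ (1 / (d : ℝ))) ^ d := hrpow.symm
    _ ≤ ‖w‖ ^ d := pow_le_pow_left₀ (le_of_lt hr0) hwlow d
end

section
/- Let d ≥ 1, δ ∈ (0,1), and let P ∈ ℂ[z] with deg P = d and |P(z)| ≤ 1 − δ for all z ∈ 𝕋. Then for every z ∈ ℂ with (1−δ)^{1/d} ≤ |z| ≤ (1−δ)^{−1/d}, the principal complex logarithm satisfies |Log(1 − P(z)·P*(1/z))| ≤ log(1/δ). (Note that |P(z)P*(1/z)| ≤ 1 − δ < 1 on this set, so 1 − P(z)P*(1/z) lies in the open right half-plane and the principal logarithm is well defined.) -/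
open Polynomial Complex

/-- Maximum modulus for polynomials on the closed unit disk. -/
lemma polyDiskBound (Q : Polynomial ℂ) {C : ℝ}
    (h : ∀ u : ℂ, ‖u‖ = 1 → ‖Q.eval u‖ ≤ C) :
    ∀ z : ℂ, ‖z‖ ≤ 1 → ‖Q.eval z‖ ≤ C := by
  intro z hz
  have hU : Bornology.IsBounded (Metric.ball (0:ℂ) 1) := Metric.isBounded_ball
  have hdc : DiffContOnCl ℂ (fun w => Q.eval w) (Metric.ball 0 1) :=
    (Q.differentiable).diffContOnCl
  have hfr : ∀ w ∈ frontier (Metric.ball (0:ℂ) 1), ‖Q.eval w‖ ≤ C := by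
    intro w hw
    rw [frontier_ball (0:ℂ) one_ne_zero] at hw
    simp only [Metric.mem_sphere, Complex.dist_eq, sub_zero] at hw
    exact h w hw
  have hcl : z ∈ closure (Metric.ball (0:ℂ) 1) := by
    rw [closure_ball (0:ℂ) one_ne_zero]
    simpa [Metric.mem_closedBall, Complex.dist_eq] using hz
  exact Complex.norm_le_of_forall_mem_frontier_norm_le hU hdc hfr hcl

lemma reverse_eval_eq (Q : Polynomial ℂ) {z : ℂ} (hz : z ≠ 0) :
    Q.reverse.eval z⁻¹ * z ^ Q.natDegree = Q.eval z := by
  letI : Invertible z := invertibleOfNonzero hz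
  have := Polynomial.eval₂_reverse_mul_pow (RingHom.id ℂ) z Q
  rw [invOf_eq_inv] at this; exact this

/-- Growth bound outside the unit disk. -/
lemma polyOuterBound (Q : Polynomial ℂ) {C : ℝ} {n : ℕ} (hn : Q.natDegree ≤ n)
    (h : ∀ u : ℂ, ‖u‖ = 1 → ‖Q.eval u‖ ≤ C) :
    ∀ z : ℂ, 1 ≤ ‖z‖ → ‖Q.eval z‖ ≤ C * ‖z‖ ^ n := by
  have hC : 0 ≤ C := le_trans (norm_nonneg _) (h 1 (by simp))
  have hrev : ∀ u : ℂ, ‖u‖ = 1 → ‖Q.reverse.eval u‖ ≤ C := by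
    intro u hu
    have hu0 : u ≠ 0 := by intro h0; simp [h0] at hu
    have huinv : u⁻¹ ≠ 0 := inv_ne_zero hu0
    have := reverse_eval_eq Q huinv
    rw [inv_inv] at this
    have habs : ‖Q.reverse.eval u‖ * ‖u⁻¹‖ ^ Q.natDegree
        = ‖Q.eval u⁻¹‖ := by
      rw [← this, norm_mul, norm_pow]
    have hu1 : ‖u⁻¹‖ = 1 := by rw [norm_inv, hu]; norm_num
    rw [hu1, one_pow, mul_one] at habs
    rw [habs]
    exact h u⁻¹ hu1
  intro z hz
  have hz0 : z ≠ 0 := by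
    intro h0; rw [h0] at hz; simp at hz; linarith
  have key := reverse_eval_eq Q hz0
  have hrb : ‖Q.reverse.eval z⁻¹‖ ≤ C := by
    apply polyDiskBound Q.reverse hrev
    rw [norm_inv]
    exact inv_le_one_of_one_le₀ hz
  calc ‖Q.eval z‖
      = ‖Q.reverse.eval z⁻¹‖ * ‖z‖ ^ Q.natDegree := by
        rw [← key, norm_mul, norm_pow]
    _ ≤ C * ‖z‖ ^ Q.natDegree := by
        apply mul_le_mul_of_nonneg_right hrb (by positivity)
    _ ≤ C * ‖z‖ ^ n := by
        apply mul_le_mul_of_nonneg_left _ hC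
        exact pow_le_pow_right₀ hz hn

/-- Log bound from the Taylor series. -/
lemma log_bound {w : ℂ} {δ : ℝ} (hδ : δ ∈ Set.Ioo (0:ℝ) 1)
    (hw : ‖w‖ ≤ 1 - δ) :
    ‖Complex.log (1 - w)‖ ≤ Real.log (1 / δ) := by
  obtain ⟨hδ0, hδ1⟩ := hδ
  have hw1 : ‖w‖ < 1 := by
    linarith
  set x : ℝ := ‖w‖ with hx
  have hx0 : 0 ≤ x := norm_nonneg w
  have hx1 : x < 1 := by simpa using hw1
  have h1 : HasSum (fun n : ℕ => w ^ n / n) (-Complex.log (1 - w)) :=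
    Complex.hasSum_taylorSeries_neg_log hw1
  have h2 : HasSum (fun n : ℕ => ((x:ℂ)) ^ n / n) (-Complex.log (1 - (x:ℂ))) :=
    Complex.hasSum_taylorSeries_neg_log (by simpa [_root_.abs_of_nonneg hx0] using hx1)
  have h2' : HasSum (fun n : ℕ => x ^ n / n) (-Real.log (1 - x)) := by
    rw [← Complex.hasSum_ofReal]
    convert h2 using 2 with n
    · push_cast; ring
    · push_cast
      rw [Complex.ofReal_log (by linarith)]
      push_cast; ring_nf
  have hnorm : ∀ n : ℕ, ‖w ^ n / (n:ℂ)‖ = x ^ n / n := by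
    intro n
    rw [norm_div, norm_pow, Complex.norm_natCast]
  have hsum_norm : Summable fun n : ℕ => ‖w ^ n / (n:ℂ)‖ := by
    apply Summable.congr h2'.summable
    intro n; exact (hnorm n).symm
  have hb : ‖-Complex.log (1 - w)‖ ≤ -Real.log (1 - x) := by
    rw [← h1.tsum_eq]
    calc ‖∑' n : ℕ, w ^ n / (n:ℂ)‖ ≤ ∑' n : ℕ, ‖w ^ n / (n:ℂ)‖ :=
          norm_tsum_le_tsum_norm hsum_norm
      _ = ∑' n : ℕ, x ^ n / n := tsum_congr hnorm
      _ = -Real.log (1 - x) := h2'.tsum_eq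
  rw [norm_neg] at hb
  refine hb.trans ?_
  rw [Real.log_div one_ne_zero (ne_of_gt hδ0), Real.log_one, zero_sub]
  have : Real.log δ ≤ Real.log (1 - x) :=
    Real.log_le_log hδ0 (by linarith)
  linarith

/-- **Bound on the logarithm in the annulus `A(r_δ)`** (Lemma 3). If `deg P = d ≥ 1`,
`δ ∈ (0,1)`, and `|P| ≤ 1 − δ` on the unit circle, then for all `z` with
`(1−δ)^{1/d} ≤ |z| ≤ (1−δ)^{−1/d}` the principal logarithm satisfies
`|Log(1 − P(z)P*(1/z))| ≤ log(1/δ)`. -/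
theorem annulus_log_bound
    (d : ℕ) (hd : 1 ≤ d) (δ : ℝ) (hδ : δ ∈ Set.Ioo (0 : ℝ) 1)
    (P : Polynomial ℂ) (hdeg : P.natDegree = d)
    (hP : ∀ z : ℂ, ‖z‖ = 1 → ‖P.eval z‖ ≤ 1 - δ) :
    ∀ z : ℂ, (1 - δ) ^ (1 / (d : ℝ)) ≤ ‖z‖ →
      ‖z‖ ≤ (1 - δ) ^ (-(1 / (d : ℝ))) →
      ‖Complex.log (1 - P.eval z * (P.map (starRingEnd ℂ)).eval z⁻¹)‖ ≤
        Real.log (1 / δ) := by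
  intro z hlo hhi
  obtain ⟨hδ0, hδ1⟩ := hδ
  have h1δ : 0 < 1 - δ := by linarith
  have hd0 : (d : ℝ) ≠ 0 := Nat.cast_ne_zero.mpr (by omega)
  have hzpos : 0 < ‖z‖ := lt_of_lt_of_le (Real.rpow_pos_of_pos h1δ _) hlo
  set M := P.map (starRingEnd ℂ) with hM
  have hMdeg : M.natDegree = d := by
    rw [hM, Polynomial.natDegree_map, hdeg]
  have hMcirc : ∀ u : ℂ, ‖u‖ = 1 → ‖M.eval u‖ ≤ 1 - δ := by
    intro u hu
    have heq : M.eval u = (starRingEnd ℂ) (P.eval ((starRingEnd ℂ) u)) := by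
      rw [hM, Polynomial.eval_map]
      conv_lhs => rw [show u = (starRingEnd ℂ) ((starRingEnd ℂ) u) from (Complex.conj_conj u).symm]
      exact Polynomial.eval₂_at_apply _ _
    rw [heq, Complex.norm_conj]
    exact hP _ (by rw [Complex.norm_conj]; exact hu)
  -- power bounds
  have hpowlo : 1 - δ ≤ ‖z‖ ^ d := by
    have : ((1 - δ) ^ (1 / (d : ℝ))) ^ d = 1 - δ := by
      rw [← Real.rpow_natCast ((1 - δ) ^ (1 / (d : ℝ))) d, ← Real.rpow_mul h1δ.le]
      rw [one_div_mul_cancel hd0, Real.rpow_one]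
    calc 1 - δ = ((1 - δ) ^ (1 / (d : ℝ))) ^ d := this.symm
      _ ≤ ‖z‖ ^ d := by
          exact pow_le_pow_left₀ (Real.rpow_nonneg h1δ.le _) hlo d
  have hpowhi : ‖z‖ ^ d ≤ (1 - δ)⁻¹ := by
    have : ((1 - δ) ^ (-(1 / (d : ℝ)))) ^ d = (1 - δ)⁻¹ := by
      rw [← Real.rpow_natCast ((1 - δ) ^ (-(1 / (d : ℝ)))) d, ← Real.rpow_mul h1δ.le]
      rw [neg_mul, one_div_mul_cancel hd0, Real.rpow_neg_one]
    calc ‖z‖ ^ d ≤ ((1 - δ) ^ (-(1 / (d : ℝ)))) ^ d :=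
          pow_le_pow_left₀ (norm_nonneg z) hhi d
      _ = (1 - δ)⁻¹ := this
  have hz1inv : ‖z⁻¹‖ = (‖z‖)⁻¹ := norm_inv _
  have hw : ‖P.eval z * M.eval z⁻¹‖ ≤ 1 - δ := by
    rcases le_or_gt (‖z‖) 1 with hle | hgt
    · -- |z| ≤ 1
      have hPz : ‖P.eval z‖ ≤ 1 - δ := polyDiskBound P hP z hle
      have hinvge : 1 ≤ ‖z⁻¹‖ := by
        rw [hz1inv]; exact (one_le_inv₀ hzpos).mpr hle
      have hMz : ‖M.eval z⁻¹‖ ≤ (1 - δ) * ‖z⁻¹‖ ^ d :=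
        polyOuterBound M (le_of_eq hMdeg) hMcirc z⁻¹ hinvge
      have hinv : (‖z‖ ^ d)⁻¹ ≤ (1 - δ)⁻¹ :=
        inv_anti₀ h1δ hpowlo
      calc ‖P.eval z * M.eval z⁻¹‖
          = ‖P.eval z‖ * ‖M.eval z⁻¹‖ := norm_mul _ _
        _ ≤ (1 - δ) * ((1 - δ) * (‖z‖ ^ d)⁻¹) := by
            rw [hz1inv, inv_pow] at hMz
            exact mul_le_mul hPz hMz (norm_nonneg _) h1δ.le
        _ ≤ (1 - δ) * ((1 - δ) * (1 - δ)⁻¹) := by gcongr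
        _ = 1 - δ := by rw [mul_inv_cancel₀ h1δ.ne', mul_one]
    · -- |z| > 1
      have hinvle : ‖z⁻¹‖ ≤ 1 := by
        rw [hz1inv]; exact inv_le_one_of_one_le₀ hgt.le
      have hMz : ‖M.eval z⁻¹‖ ≤ 1 - δ := polyDiskBound M hMcirc z⁻¹ hinvle
      have hPz : ‖P.eval z‖ ≤ (1 - δ) * ‖z‖ ^ d :=
        polyOuterBound P (le_of_eq hdeg) hP z hgt.le
      calc ‖P.eval z * M.eval z⁻¹‖
          = ‖P.eval z‖ * ‖M.eval z⁻¹‖ := norm_mul _ _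
        _ ≤ ((1 - δ) * ‖z‖ ^ d) * (1 - δ) :=
            mul_le_mul hPz hMz (norm_nonneg _) (by positivity)
        _ ≤ ((1 - δ) * (1 - δ)⁻¹) * (1 - δ) := by gcongr
        _ = 1 - δ := by rw [mul_inv_cancel₀ h1δ.ne', one_mul]
  exact log_bound ⟨hδ0, hδ1⟩ hw
end

section
/- Let d ≥ 1, ε ∈ (0,1), and let P, Q ∈ ℂ[z] be polynomials of degree at most d with |P(z)|² + |Q(z)|² = 1 for all z ∈ 𝕋, with monomial coefficients pₙ and qₙ (0 ≤ n ≤ d, set to 0 outside this range). Suppose q̃₀, …, q̃_d ∈ ℂ satisfy |qₙ − q̃ₙ| < ε for all 0 ≤ n ≤ d, and set Q̃(z) := Σ_{n=0}^{d} q̃ₙ zⁿ. Then Φ(P,Q̃) < (d+1)(d+3)·ε and Φ̃(P,Q̃) < 3(d+1)(2d+1)·ε. -/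
lemma circle_infinite : {z : ℂ | ‖z‖ = 1}.Infinite := by
  apply Set.infinite_of_injective_forall_mem
    (f := fun t : ℕ => Complex.exp ((Real.arctan t) * Complex.I))
  case hi =>
    intro a b hab
    rw [Complex.exp_eq_exp_iff_exists_int] at hab
    obtain ⟨n, hn⟩ := hab
    have h2 : Real.arctan a = Real.arctan b + n * (2 * Real.pi) := by
      have h3 := congrArg Complex.im hn
      simp only [Complex.add_im, Complex.mul_im, Complex.I_im, Complex.I_re,
        Complex.ofReal_re, Complex.ofReal_im, Complex.re_ofNat, Complex.im_ofNat,
        Complex.mul_re, Complex.intCast_re, Complex.intCast_im, mul_one, mul_zero,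
        zero_mul, add_zero, zero_add, sub_zero, zero_sub, neg_zero] at h3
      linarith [h3]
    have hp := Real.pi_gt_three
    have ha1 := Real.arctan_lt_pi_div_two a
    have ha2 := Real.neg_pi_div_two_lt_arctan a
    have hb1 := Real.arctan_lt_pi_div_two b
    have hb2 := Real.neg_pi_div_two_lt_arctan b
    have hn0 : n = 0 := by
      rcases lt_trichotomy n 0 with h | h | h
      · have h' : (n:ℝ) ≤ -1 := by exact_mod_cast (by omega : n ≤ -1)
        nlinarith
      · exact h
      · have h' : (1:ℝ) ≤ n := by exact_mod_cast (by omega : 1 ≤ n)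
        nlinarith
    rw [hn0] at h2; simp at h2
    exact h2
  case hf =>
    intro t
    simpa using Complex.norm_exp_ofReal_mul_I (Real.arctan t)

lemma shift_sum (P : Polynomial ℂ) (d m : ℕ) (hP : P.natDegree ≤ d) (hm : m ≤ d) (z : ℂ) :
    ∑ k ∈ Finset.range (2*d+1), coeffExt P ((k:ℤ) - d + m) * z^k
      = z^(d-m) * P.eval z := by
  have h1 : P.eval z = ∑ n ∈ Finset.range (d+1), P.coeff n * z^n :=
    Polynomial.eval_eq_sum_range' (Nat.lt_succ_of_le hP) z
  have hsub : (Finset.range (d+1)).image (fun n => n + (d - m)) ⊆ Finset.range (2*d+1) := by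
    intro k hk; simp only [Finset.mem_image, Finset.mem_range] at *
    obtain ⟨n, hn, rfl⟩ := hk; omega
  rw [← Finset.sum_subset hsub ?_]
  · rw [Finset.sum_image (by intro a _ b _ h; simp only at h; omega)]
    rw [h1, Finset.mul_sum]
    refine Finset.sum_congr rfl fun n hn => ?_
    simp only [Finset.mem_range] at hn
    have he : ((n + (d - m) : ℕ) : ℤ) - d + m = n := by push_cast; omega
    rw [he]
    simp only [coeffExt, Int.ofNat_nonneg, if_pos, Int.toNat_natCast]
    rw [pow_add]; ring
  · intro k hk hk2
    simp only [Finset.mem_range, Finset.mem_image] at *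
    have hcase : (k:ℤ) - d + m < 0 ∨ (d:ℤ) < (k:ℤ) - d + m := by
      by_contra h; push_neg at h
      exact hk2 ⟨((k:ℤ)-d+m).toNat, by omega, by omega⟩
    rcases hcase with h | h
    · simp [coeffExt, not_le.mpr h]
    · have h0 : (0:ℤ) ≤ (k:ℤ) - d + m := by omega
      have hlt : d < ((k:ℤ) - d + m).toNat := by omega
      simp [coeffExt, h0, Polynomial.coeff_eq_zero_of_natDegree_lt (lt_of_le_of_lt hP hlt)]

lemma conj_eval_circle (P : Polynomial ℂ) (d : ℕ) (hP : P.natDegree ≤ d)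
    (z : ℂ) (hz : ‖z‖ = 1) :
    (starRingEnd ℂ) (P.eval z) = ∑ m ∈ Finset.range (d+1),
      (starRingEnd ℂ) (P.coeff m) * (z⁻¹)^m := by
  have hcz : (starRingEnd ℂ) z = z⁻¹ := by
    apply eq_inv_of_mul_eq_one_right
    rw [Complex.mul_conj]
    norm_cast
    rw [← Complex.sq_norm, hz]; norm_num
  rw [Polynomial.eval_eq_sum_range' (Nat.lt_succ_of_le hP) z, map_sum]
  refine Finset.sum_congr rfl fun m _ => ?_
  rw [map_mul, map_pow, hcz]

lemma autocorr (d : ℕ) (P Q : Polynomial ℂ) (hP : P.natDegree ≤ d) (hQ : Q.natDegree ≤ d)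
    (hPQ : ∀ z : ℂ, ‖z‖ = 1 →
      ‖P.eval z‖ ^ 2 + ‖Q.eval z‖ ^ 2 = 1) :
    ∀ n : ℤ, -(d:ℤ) ≤ n → n ≤ d →
      (∑ m ∈ Finset.range (d+1),
        (coeffExt P (n+m) * starRingEnd ℂ (coeffExt P m) +
          coeffExt Q (n+m) * starRingEnd ℂ (coeffExt Q m)))
        = if n = 0 then 1 else 0 := by
  set c : ℤ → ℂ := fun n =>
    (∑ m ∈ Finset.range (d+1),
      (coeffExt P (n+m) * starRingEnd ℂ (coeffExt P m) +
        coeffExt Q (n+m) * starRingEnd ℂ (coeffExt Q m))) - (if n = 0 then 1 else 0) with hc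
  set R : Polynomial ℂ := ∑ k ∈ Finset.range (2*d+1),
    Polynomial.C (c ((k:ℤ) - d)) * Polynomial.X ^ k with hR
  have key : ∀ (A : Polynomial ℂ), A.natDegree ≤ d → ∀ z : ℂ, ‖z‖ = 1 →
      ∑ k ∈ Finset.range (2*d+1), (∑ m ∈ Finset.range (d+1),
          coeffExt A ((k:ℤ) - d + m) * starRingEnd ℂ (coeffExt A m)) * z^k
        = z^d * ((A.eval z) * starRingEnd ℂ (A.eval z)) := by
    intro A hA z hz
    have hz0 : z ≠ 0 := by
      intro h; rw [h] at hz; simp at hz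
    calc ∑ k ∈ Finset.range (2*d+1), (∑ m ∈ Finset.range (d+1),
            coeffExt A ((k:ℤ) - d + m) * starRingEnd ℂ (coeffExt A m)) * z^k
        = ∑ m ∈ Finset.range (d+1), ∑ k ∈ Finset.range (2*d+1),
            (coeffExt A ((k:ℤ) - d + m) * z^k) * starRingEnd ℂ (coeffExt A m) := by
          rw [Finset.sum_comm]
          exact Finset.sum_congr rfl fun k _ => by rw [Finset.sum_mul]; exact Finset.sum_congr rfl fun m _ => by ring
      _ = ∑ m ∈ Finset.range (d+1),
            (z^(d-m) * A.eval z) * starRingEnd ℂ (coeffExt A m) := by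
          refine Finset.sum_congr rfl fun m hm => ?_
          rw [← Finset.sum_mul, shift_sum A d m hA (by simpa using Nat.lt_succ_iff.mp (Finset.mem_range.mp hm)) z]
      _ = z^d * ((A.eval z) * starRingEnd ℂ (A.eval z)) := by
          rw [conj_eval_circle A d hA z hz, Finset.mul_sum, Finset.mul_sum]
          refine Finset.sum_congr rfl fun m hm => ?_
          have hm' : m ≤ d := Nat.lt_succ_iff.mp (Finset.mem_range.mp hm)
          have hpow : z^(d-m) = z^d * (z⁻¹)^m := by
            rw [inv_pow, eq_comm, mul_inv_eq_iff_eq_mul₀ (pow_ne_zero m hz0), ← pow_add]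
            congr 1
            omega
          rw [hpow]
          have : coeffExt A (m:ℤ) = A.coeff m := by simp [coeffExt]
          rw [this]; ring
  have hRz : ∀ z : ℂ, ‖z‖ = 1 → R.eval z = 0 := by
    intro z hz
    have heval : R.eval z = ∑ k ∈ Finset.range (2*d+1), c ((k:ℤ) - d) * z^k := by
      simp [hR, Polynomial.eval_finset_sum]
    rw [heval]
    have hsplit : ∑ k ∈ Finset.range (2*d+1), c ((k:ℤ) - d) * z^k
        = (∑ k ∈ Finset.range (2*d+1), (∑ m ∈ Finset.range (d+1),
              coeffExt P ((k:ℤ) - d + m) * starRingEnd ℂ (coeffExt P m)) * z^k)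
          + (∑ k ∈ Finset.range (2*d+1), (∑ m ∈ Finset.range (d+1),
              coeffExt Q ((k:ℤ) - d + m) * starRingEnd ℂ (coeffExt Q m)) * z^k)
          - (∑ k ∈ Finset.range (2*d+1), (if (k:ℤ) - d = 0 then (1:ℂ) else 0) * z^k) := by
      rw [← Finset.sum_add_distrib, ← Finset.sum_sub_distrib]
      refine Finset.sum_congr rfl fun k _ => ?_
      simp only [hc, Finset.sum_add_distrib]
      ring
    have hdelta : ∑ k ∈ Finset.range (2*d+1), (if (k:ℤ) - d = 0 then (1:ℂ) else 0) * z^k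
        = z^d := by
      have : ∀ k ∈ Finset.range (2*d+1),
          (if (k:ℤ) - d = 0 then (1:ℂ) else 0) * z^k = if k = d then z^k else 0 := by
        intro k _
        by_cases h : k = d
        · simp [h]
        · have : ((k:ℤ) - d ≠ 0) := by omega
          simp [h, this]
      rw [Finset.sum_congr rfl this, Finset.sum_ite_eq' (Finset.range (2*d+1)) d (fun k => z^k)]
      simp only [Finset.mem_range]
      rw [if_pos (by omega)]
    rw [hsplit, key P hP z hz, key Q hQ z hz, hdelta]
    rw [Complex.mul_conj, Complex.mul_conj]
    have hns : (Complex.normSq (P.eval z) : ℝ) + Complex.normSq (Q.eval z) = 1 := by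
      rw [← Complex.sq_norm, ← Complex.sq_norm]; exact hPQ z hz
    have : ((Complex.normSq (P.eval z) : ℂ)) + (Complex.normSq (Q.eval z) : ℂ) = 1 := by
      exact_mod_cast congrArg (fun x : ℝ => (x : ℂ)) hns
    calc z^d * (Complex.normSq (P.eval z) : ℂ) + z^d * (Complex.normSq (Q.eval z) : ℂ) - z^d
        = z^d * (((Complex.normSq (P.eval z) : ℂ)) + (Complex.normSq (Q.eval z) : ℂ) - 1) := by ring
      _ = 0 := by rw [this]; ring
  have hR0 : R = 0 :=
    Polynomial.eq_zero_of_infinite_isRoot R (circle_infinite.mono (fun z hz => hRz z hz))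
  intro n hn1 hn2
  have hcn : c n = 0 := by
    have hcoef : R.coeff ((n + d).toNat) = c n := by
      rw [hR]
      rw [Polynomial.finset_sum_coeff]
      have : ∀ k ∈ Finset.range (2*d+1),
          (Polynomial.C (c ((k:ℤ) - d)) * Polynomial.X ^ k).coeff ((n + d).toNat)
            = if (n + d).toNat = k then c ((k:ℤ) - d) else 0 := by
        intro k _
        rw [Polynomial.coeff_C_mul, Polynomial.coeff_X_pow]
        by_cases h : (n + d).toNat = k <;> simp [h]
      rw [Finset.sum_congr rfl this,
        Finset.sum_ite_eq (Finset.range (2*d+1)) ((n + d).toNat) (fun k => c ((k:ℤ) - d))]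
      rw [if_pos (Finset.mem_range.mpr (by omega))]
      congr 1
      omega
    rw [hR0] at hcoef
    simp at hcoef
    exact hcoef.symm
  have := sub_eq_zero.mp hcn
  exact this

/-- **Propagation of coefficient errors to the error metrics** (Corollary 3). If `P, Q`
are degree-`≤ d` polynomials with `|P|² + |Q|² = 1` on `𝕋` and `q̃₀,…,q̃_d` approximate the
coefficients of `Q` to accuracy `ε` each, then `Q̃(z) = Σ q̃ₙ zⁿ` satisfies
`Φ(P,Q̃) < (d+1)(d+3)ε` and `Φ̃(P,Q̃) < 3(d+1)(2d+1)ε`. -/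
theorem error_metric_bounds
    (d : ℕ) (hd : 1 ≤ d) (ε : ℝ) (hε : ε ∈ Set.Ioo (0 : ℝ) 1)
    (P Q : Polynomial ℂ) (hPdeg : P.natDegree ≤ d) (hQdeg : Q.natDegree ≤ d)
    (hPQ : ∀ z : ℂ, ‖z‖ = 1 →
      ‖P.eval z‖ ^ 2 + ‖Q.eval z‖ ^ 2 = 1)
    (tq : ℕ → ℂ) (htq : ∀ n : ℕ, n ≤ d → ‖Q.coeff n - tq n‖ < ε)
    (Qt : Polynomial ℂ)
    (hQt : Qt = ∑ n ∈ Finset.range (d + 1), Polynomial.C (tq n) * Polynomial.X ^ n) :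
    (⨆ z : {z : ℂ // ‖z‖ = 1},
        |‖P.eval z.1‖ ^ 2 + ‖Qt.eval z.1‖ ^ 2 - 1|) <
      ((d : ℝ) + 1) * ((d : ℝ) + 3) * ε ∧
    Real.sqrt (∑ n ∈ Finset.Icc (-(d : ℤ)) (d : ℤ),
        ‖(∑ m ∈ Finset.range (d + 1),
            (coeffExt P (n + m) * starRingEnd ℂ (coeffExt P m) +
              coeffExt Qt (n + m) * starRingEnd ℂ (coeffExt Qt m))) -
          if n = 0 then 1 else 0‖ ^ 2) <
      3 * ((d : ℝ) + 1) * (2 * (d : ℝ) + 1) * ε := by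
  obtain ⟨hε0, hε1⟩ := hε
  have hauto := autocorr d P Q hPdeg hQdeg hPQ
  -- coefficients of Qt
  have hQtcoeff : ∀ n : ℕ, Qt.coeff n = if n < d + 1 then tq n else 0 := by
    intro n
    rw [hQt, Polynomial.finset_sum_coeff]
    have h1 : ∀ k ∈ Finset.range (d+1),
        (Polynomial.C (tq k) * Polynomial.X ^ k).coeff n = if n = k then tq k else 0 := by
      intro k _
      rw [Polynomial.coeff_C_mul, Polynomial.coeff_X_pow]
      by_cases h : n = k <;> simp [h]
    rw [Finset.sum_congr rfl h1, Finset.sum_ite_eq (Finset.range (d+1)) n tq]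
    simp [Finset.mem_range]
  -- coefficient bound for Q
  have hq1 : ∀ j : ℤ, ‖coeffExt Q j‖ ≤ 1 := by
    have h0 := hauto 0 (by omega) (by omega)
    rw [if_pos rfl] at h0
    simp only [zero_add] at h0
    have h0' : ∑ m ∈ Finset.range (d+1),
        ((Complex.normSq (coeffExt P (m:ℤ)) : ℂ) + (Complex.normSq (coeffExt Q (m:ℤ)) : ℂ)) = 1 := by
      rw [← h0]
      refine Finset.sum_congr rfl fun m _ => ?_
      rw [Complex.mul_conj, Complex.mul_conj]
    have hreal : ∑ m ∈ Finset.range (d+1),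
        (Complex.normSq (coeffExt P (m:ℤ)) + Complex.normSq (coeffExt Q (m:ℤ))) = 1 := by
      exact_mod_cast h0'
    intro j
    by_cases hj : 0 ≤ j
    · by_cases hjd : j.toNat ≤ d
      · have hmem : j.toNat ∈ Finset.range (d+1) := Finset.mem_range.mpr (by omega)
        have hle : Complex.normSq (coeffExt Q ((j.toNat : ℕ) : ℤ)) ≤ 1 := by
          calc Complex.normSq (coeffExt Q ((j.toNat : ℕ) : ℤ))
              ≤ Complex.normSq (coeffExt P ((j.toNat : ℕ) : ℤ))
                  + Complex.normSq (coeffExt Q ((j.toNat : ℕ) : ℤ)) := by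
                have := Complex.normSq_nonneg (coeffExt P ((j.toNat : ℕ) : ℤ)); linarith
            _ ≤ ∑ m ∈ Finset.range (d+1),
                (Complex.normSq (coeffExt P (m:ℤ)) + Complex.normSq (coeffExt Q (m:ℤ))) := by
                refine Finset.single_le_sum (f := fun m : ℕ =>
                    Complex.normSq (coeffExt P (m:ℤ)) + Complex.normSq (coeffExt Q (m:ℤ)))
                  (fun i _ => add_nonneg (Complex.normSq_nonneg _) (Complex.normSq_nonneg _))
                  hmem
            _ = 1 := hreal
        have hj' : j = ((j.toNat : ℕ) : ℤ) := by omega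
        rw [hj']
        rw [Complex.norm_def]
        calc Real.sqrt (Complex.normSq (coeffExt Q ((j.toNat : ℕ) : ℤ)))
            ≤ Real.sqrt 1 := Real.sqrt_le_sqrt hle
          _ = 1 := Real.sqrt_one
      · have hlt2 : Q.natDegree < j.toNat := by omega
        have : Q.coeff j.toNat = 0 := Polynomial.coeff_eq_zero_of_natDegree_lt hlt2
        simp [coeffExt, hj, this]
    · simp [coeffExt, hj]
  -- error bound
  have he : ∀ j : ℤ, ‖coeffExt Qt j - coeffExt Q j‖ ≤ ε := by
    intro j
    by_cases hj : 0 ≤ j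
    · by_cases hjd : j.toNat ≤ d
      · have h1 : coeffExt Qt j = tq j.toNat := by
          simp [coeffExt, hj, hQtcoeff, Nat.lt_succ_of_le hjd]
        have h2 : coeffExt Q j = Q.coeff j.toNat := by simp [coeffExt, hj]
        rw [h1, h2, norm_sub_rev]
        exact (htq j.toNat hjd).le
      · have hlt : ¬ (j.toNat < d + 1) := by omega
        have h1 : coeffExt Qt j = 0 := by
          simp [coeffExt, hj, hQtcoeff, hlt]
        have hlt2 : Q.natDegree < j.toNat := by omega
        have h2 : coeffExt Q j = 0 := by
          simp [coeffExt, hj, Polynomial.coeff_eq_zero_of_natDegree_lt hlt2]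
        simp [h1, h2, hε0.le]
    · simp [coeffExt, hj, hε0.le]
  have hqt1 : ∀ j : ℤ, ‖coeffExt Qt j‖ ≤ 1 + ε := by
    intro j
    calc ‖coeffExt Qt j‖
        = ‖coeffExt Q j + (coeffExt Qt j - coeffExt Q j)‖ := by ring_nf
      _ ≤ ‖coeffExt Q j‖ + ‖coeffExt Qt j - coeffExt Q j‖ :=
          norm_add_le _ _
      _ ≤ 1 + ε := add_le_add (hq1 j) (he j)
  constructor
  · -- Part 1
    set S : ℝ := ∑ n ∈ Finset.range (d+1), ‖Q.coeff n - tq n‖ with hSdef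
    have hS0 : 0 ≤ S := Finset.sum_nonneg fun n _ => norm_nonneg _
    have hSlt : S < ((d:ℝ)+1)*ε := by
      calc S < ∑ _n ∈ Finset.range (d+1), ε :=
            Finset.sum_lt_sum_of_nonempty Finset.nonempty_range_add_one
              (fun n hn => htq n (Nat.lt_succ_iff.mp (Finset.mem_range.mp hn)))
        _ = ((d:ℝ)+1)*ε := by
            rw [Finset.sum_const, Finset.card_range, nsmul_eq_mul]; push_cast; ring
    have key : ∀ z : {z : ℂ // ‖z‖ = 1},
        |‖P.eval z.1‖ ^ 2 + ‖Qt.eval z.1‖ ^ 2 - 1| ≤ S*(2+S) := by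
      rintro ⟨z, hz⟩
      show |‖P.eval z‖ ^ 2 + ‖Qt.eval z‖ ^ 2 - 1| ≤ S*(2+S)
      have hQeval : Q.eval z = ∑ n ∈ Finset.range (d+1), Q.coeff n * z^n :=
        Polynomial.eval_eq_sum_range' (Nat.lt_succ_of_le hQdeg) z
      have hQteval : Qt.eval z = ∑ n ∈ Finset.range (d+1), tq n * z^n := by
        rw [hQt]; simp [Polynomial.eval_finset_sum]
      have hdiff : ‖Qt.eval z - Q.eval z‖ ≤ S := by
        rw [hQeval, hQteval, ← Finset.sum_sub_distrib]
        refine le_trans (norm_sum_le _ _) ?_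
        apply Finset.sum_le_sum
        intro n _
        rw [show tq n * z^n - Q.coeff n * z^n = -((Q.coeff n - tq n) * z^n) by ring]
        rw [norm_neg, norm_mul, norm_pow, hz, one_pow, mul_one]
      have hQ1 : ‖Q.eval z‖ ≤ 1 := by
        have h := hPQ z hz
        nlinarith [norm_nonneg (P.eval z), norm_nonneg (Q.eval z)]
      have hQt1' : ‖Qt.eval z‖ ≤ 1 + S := by
        calc ‖Qt.eval z‖
            = ‖Q.eval z + (Qt.eval z - Q.eval z)‖ := by ring_nf
          _ ≤ ‖Q.eval z‖ + ‖Qt.eval z - Q.eval z‖ :=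
              norm_add_le _ _
          _ ≤ 1 + S := add_le_add hQ1 hdiff
      have habs : |‖Qt.eval z‖ - ‖Q.eval z‖|
          ≤ ‖Qt.eval z - Q.eval z‖ :=
        abs_norm_sub_norm_le _ _
      have hre : ‖P.eval z‖^2 + ‖Qt.eval z‖^2 - 1
          = (‖Qt.eval z‖ - ‖Q.eval z‖)
            * (‖Qt.eval z‖ + ‖Q.eval z‖) := by
        have h := hPQ z hz
        nlinarith [h]
      rw [hre, abs_mul]
      have h1 : |‖Qt.eval z‖ - ‖Q.eval z‖| ≤ S :=
        le_trans habs hdiff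
      have h2 : |‖Qt.eval z‖ + ‖Q.eval z‖| ≤ 2 + S := by
        rw [abs_of_nonneg (by positivity)]
        linarith
      exact mul_le_mul h1 h2 (abs_nonneg _) hS0
    have hsup : (⨆ z : {z : ℂ // ‖z‖ = 1},
        |‖P.eval z.1‖ ^ 2 + ‖Qt.eval z.1‖ ^ 2 - 1|) ≤ S*(2+S) :=
      Real.iSup_le key (by positivity)
    apply lt_of_le_of_lt hsup
    have hdpos : (0:ℝ) < (d:ℝ)+1 := by positivity
    calc S*(2+S) < (((d:ℝ)+1)*ε)*(2+S) :=
          mul_lt_mul_of_pos_right hSlt (by linarith)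
      _ ≤ (((d:ℝ)+1)*ε)*((d:ℝ)+3) := by
          apply mul_le_mul_of_nonneg_left ?_ (by positivity)
          nlinarith [hSlt, hε0, hε1, hS0, hdpos]
      _ = ((d:ℝ)+1)*((d:ℝ)+3)*ε := by ring
  · -- Part 2
    set B : ℝ := ((d:ℝ)+1) * ((2+ε)*ε) with hBdef
    have hB0 : 0 ≤ B := by positivity
    have hterm : ∀ n ∈ Finset.Icc (-(d:ℤ)) (d:ℤ),
        ‖(∑ m ∈ Finset.range (d + 1),
            (coeffExt P (n + m) * starRingEnd ℂ (coeffExt P m) +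
              coeffExt Qt (n + m) * starRingEnd ℂ (coeffExt Qt m))) -
          if n = 0 then 1 else 0‖ ≤ B := by
      intro n hn
      obtain ⟨hn1, hn2⟩ := Finset.mem_Icc.mp hn
      have hXX : (∑ m ∈ Finset.range (d + 1),
            (coeffExt P (n + m) * starRingEnd ℂ (coeffExt P m) +
              coeffExt Qt (n + m) * starRingEnd ℂ (coeffExt Qt m))) -
          (if n = 0 then (1:ℂ) else 0)
          = ∑ m ∈ Finset.range (d + 1),
            (coeffExt Qt (n + m) * starRingEnd ℂ (coeffExt Qt m)
              - coeffExt Q (n + m) * starRingEnd ℂ (coeffExt Q m)) := by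
        have hsplit : (∑ m ∈ Finset.range (d + 1),
            (coeffExt P (n + m) * starRingEnd ℂ (coeffExt P m) +
              coeffExt Qt (n + m) * starRingEnd ℂ (coeffExt Qt m)))
            = (∑ m ∈ Finset.range (d + 1),
                (coeffExt P (n + m) * starRingEnd ℂ (coeffExt P m) +
                  coeffExt Q (n + m) * starRingEnd ℂ (coeffExt Q m)))
              + ∑ m ∈ Finset.range (d + 1),
                (coeffExt Qt (n + m) * starRingEnd ℂ (coeffExt Qt m)
                  - coeffExt Q (n + m) * starRingEnd ℂ (coeffExt Q m)) := by
          rw [← Finset.sum_add_distrib]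
          exact Finset.sum_congr rfl fun m _ => by ring
        rw [hsplit, hauto n hn1 hn2]
        ring
      rw [hXX]
      refine le_trans (norm_sum_le _ _) ?_
      calc ∑ m ∈ Finset.range (d + 1),
            ‖coeffExt Qt (n + m) * starRingEnd ℂ (coeffExt Qt m)
              - coeffExt Q (n + m) * starRingEnd ℂ (coeffExt Q m)‖
          ≤ ∑ _m ∈ Finset.range (d + 1), (2+ε)*ε := by
            apply Finset.sum_le_sum
            intro m _
            have hrw : coeffExt Qt (n + m) * starRingEnd ℂ (coeffExt Qt m)
                - coeffExt Q (n + m) * starRingEnd ℂ (coeffExt Q m)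
                = (coeffExt Qt (n + m) - coeffExt Q (n + m)) * starRingEnd ℂ (coeffExt Qt m)
                  + coeffExt Q (n + m) * starRingEnd ℂ (coeffExt Qt m - coeffExt Q m) := by
              rw [map_sub]; ring
            rw [hrw]
            refine le_trans (norm_add_le _ _) ?_
            rw [norm_mul, norm_mul, Complex.norm_conj, Complex.norm_conj]
            have a1 := he (n + m)
            have a2 := hqt1 (m : ℤ)
            have a3 := hq1 (n + m)
            have a4 := he (m : ℤ)
            have n1 := norm_nonneg (coeffExt Qt (n + m) - coeffExt Q (n + m))
            have n2 := norm_nonneg (coeffExt Qt (m:ℤ))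
            have n3 := norm_nonneg (coeffExt Q (n + m))
            have n4 := norm_nonneg (coeffExt Qt (m:ℤ) - coeffExt Q (m:ℤ))
            nlinarith [hε0]
        _ = B := by
            rw [Finset.sum_const, Finset.card_range, nsmul_eq_mul, hBdef]; push_cast; ring
    have hcard : (Finset.Icc (-(d:ℤ)) (d:ℤ)).card = 2*d+1 := by
      rw [Int.card_Icc]; omega
    have hsum : ∑ n ∈ Finset.Icc (-(d:ℤ)) (d:ℤ),
        ‖(∑ m ∈ Finset.range (d + 1),
            (coeffExt P (n + m) * starRingEnd ℂ (coeffExt P m) +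
              coeffExt Qt (n + m) * starRingEnd ℂ (coeffExt Qt m))) -
          if n = 0 then 1 else 0‖ ^ 2
        ≤ ((2*(d:ℝ)+1) * B)^2 := by
      calc ∑ n ∈ Finset.Icc (-(d:ℤ)) (d:ℤ),
            ‖(∑ m ∈ Finset.range (d + 1),
                (coeffExt P (n + m) * starRingEnd ℂ (coeffExt P m) +
                  coeffExt Qt (n + m) * starRingEnd ℂ (coeffExt Qt m))) -
              if n = 0 then 1 else 0‖ ^ 2
          ≤ ∑ _n ∈ Finset.Icc (-(d:ℤ)) (d:ℤ), B^2 := by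
            apply Finset.sum_le_sum
            intro n hn
            have h := hterm n hn
            have := norm_nonneg ((∑ m ∈ Finset.range (d + 1),
                (coeffExt P (n + m) * starRingEnd ℂ (coeffExt P m) +
                  coeffExt Qt (n + m) * starRingEnd ℂ (coeffExt Qt m))) -
              if n = 0 then 1 else 0)
            nlinarith
        _ = (2*(d:ℝ)+1) * B^2 := by
            rw [Finset.sum_const, hcard, nsmul_eq_mul]; push_cast; ring
        _ ≤ ((2*(d:ℝ)+1) * B)^2 := by nlinarith [hB0, sq_nonneg B]
    have hsqrt : Real.sqrt (∑ n ∈ Finset.Icc (-(d:ℤ)) (d:ℤ),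
        ‖(∑ m ∈ Finset.range (d + 1),
            (coeffExt P (n + m) * starRingEnd ℂ (coeffExt P m) +
              coeffExt Qt (n + m) * starRingEnd ℂ (coeffExt Qt m))) -
          if n = 0 then 1 else 0‖ ^ 2) ≤ (2*(d:ℝ)+1) * B := by
      rw [show (2*(d:ℝ)+1) * B = Real.sqrt (((2*(d:ℝ)+1) * B)^2) from
        (Real.sqrt_sq (by positivity)).symm]
      exact Real.sqrt_le_sqrt hsum
    apply lt_of_le_of_lt hsqrt
    have hdpos : (0:ℝ) < (d:ℝ)+1 := by positivity
    rw [hBdef]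
    nlinarith [hε0, hε1, mul_pos hdpos hε0, mul_pos (mul_pos hdpos hε0) (by positivity : (0:ℝ) < 2*(d:ℝ)+1)]
end

section
/- Fix an integer d ≥ 1 and real numbers λ, θ₀, …, θ_d, φ₀, …, φ_d. Define, for z ∈ ℂ, the ordered matrix product U(z) := A₀(λ,φ₀,θ₀) · (D(z)A(φ₁,θ₁)) · (D(z)A(φ₂,θ₂)) ⋯ (D(z)A(φ_d,θ_d)) and u(z) := (−1)^d · z^d · e^{i(λ + φ₀ + φ₁ + ⋯ + φ_d)}. Then for every z ∈ 𝕋: the (2,1) entry of U(z) equals u(z) · conj( (1,2) entry of U(z) ), and the (2,2) entry of U(z) equals −u(z) · conj( (1,1) entry of U(z) ). -/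
open Complex

/-- The matrix `A₀(λ,φ,θ)` of the GQSP sequence. -/
noncomputable def gqspA0 (lam phi th : ℝ) : Matrix (Fin 2) (Fin 2) ℂ :=
  !![Complex.exp (Complex.I * ((lam : ℂ) + (phi : ℂ))) * (Real.cos th : ℂ),
      Complex.exp (Complex.I * (lam : ℂ)) * (Real.sin th : ℂ);
     Complex.exp (Complex.I * (phi : ℂ)) * (Real.sin th : ℂ),
      -(Real.cos th : ℂ)]

/-- The matrix `A(φ,θ)` of the GQSP sequence. -/
noncomputable def gqspA (phi th : ℝ) : Matrix (Fin 2) (Fin 2) ℂ :=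
  !![Complex.exp (Complex.I * (phi : ℂ)) * (Real.cos th : ℂ), (Real.sin th : ℂ);
     Complex.exp (Complex.I * (phi : ℂ)) * (Real.sin th : ℂ), -(Real.cos th : ℂ)]

/-- The matrix `D(z)`. -/
noncomputable def gqspD (z : ℂ) : Matrix (Fin 2) (Fin 2) ℂ :=
  !![z, 0; 0, 1]

/-- The ordered GQSP product `U(z) = A₀(λ,φ₀,θ₀) ⬝ ∏_{j=1}^d (D(z) A(φⱼ,θⱼ))`. -/
noncomputable def gqspU (d : ℕ) (lam : ℝ) (phi th : ℕ → ℝ) (z : ℂ) :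
    Matrix (Fin 2) (Fin 2) ℂ :=
  gqspA0 lam (phi 0) (th 0) *
    ((List.range d).map (fun j => gqspD z * gqspA (phi (j + 1)) (th (j + 1)))).prod

lemma gqsp_step (M M' : Matrix (Fin 2) (Fin 2) ℂ) (u z : ℂ) (phi th : ℝ)
    (hz : starRingEnd ℂ z * z = 1)
    (hM' : M' = M * (gqspD z * gqspA phi th))
    (h1 : M 1 0 = u * starRingEnd ℂ (M 0 1))
    (h2 : M 1 1 = -(u * starRingEnd ℂ (M 0 0))) :
    M' 1 0 = (-(z * Complex.exp (Complex.I * (phi : ℂ))) * u) * starRingEnd ℂ (M' 0 1) ∧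
    M' 1 1 = -((-(z * Complex.exp (Complex.I * (phi : ℂ))) * u) * starRingEnd ℂ (M' 0 0)) := by
  have hconj : starRingEnd ℂ (Complex.exp (Complex.I * (phi : ℂ))) =
      Complex.exp (-(Complex.I * (phi : ℂ))) := by
    rw [← Complex.exp_conj]; congr 1; simp
  have hexp : Complex.exp (Complex.I * (phi : ℂ)) * Complex.exp (-(Complex.I * (phi : ℂ))) = 1 := by
    rw [← Complex.exp_add]; simp
  subst hM'
  rw [Matrix.eta_fin_two M, gqspD, gqspA, Matrix.mul_fin_two, Matrix.mul_fin_two]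
  constructor
  · simp [h1, h2, hconj, ← Complex.cos_conj, ← Complex.sin_conj, Complex.conj_ofReal]
    ring_nf
    linear_combination (u * Complex.exp (Complex.I * (phi : ℂ)) * starRingEnd ℂ (M 0 0) *
      Complex.sin (th : ℂ)) * hz
  · simp [h1, h2, hconj, ← Complex.cos_conj, ← Complex.sin_conj, Complex.conj_ofReal]
    ring_nf
    linear_combination (-(u * starRingEnd ℂ (M 0 1) * z * Complex.sin (th : ℂ)) -
        u * starRingEnd ℂ (M 0 0) * Complex.cos (th : ℂ)) * hexp +
      (-(u * starRingEnd ℂ (M 0 0) * Complex.cos (th : ℂ) * Complex.exp (Complex.I * (phi : ℂ)) *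
        Complex.exp (-(Complex.I * (phi : ℂ))))) * hz

lemma gqsp_main (lam : ℝ) (th phi : ℕ → ℝ) (z : ℂ) (hz : starRingEnd ℂ z * z = 1) :
    ∀ d : ℕ,
      gqspU d lam phi th z 1 0 = ((-1 : ℂ) ^ d * z ^ d *
          Complex.exp (Complex.I * (((lam + ∑ j ∈ Finset.range (d + 1), phi j : ℝ)) : ℂ))) *
        starRingEnd ℂ (gqspU d lam phi th z 0 1) ∧
      gqspU d lam phi th z 1 1 = -(((-1 : ℂ) ^ d * z ^ d *
          Complex.exp (Complex.I * (((lam + ∑ j ∈ Finset.range (d + 1), phi j : ℝ)) : ℂ))) *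
        starRingEnd ℂ (gqspU d lam phi th z 0 0)) := by
  intro d
  induction d with
  | zero =>
    have hU : gqspU 0 lam phi th z = gqspA0 lam (phi 0) (th 0) := by
      simp [gqspU]
    have e1 : Complex.exp (Complex.I * ((lam:ℂ) + (phi 0:ℂ))) *
        starRingEnd ℂ (Complex.exp (Complex.I * (lam:ℂ))) =
        Complex.exp (Complex.I * (phi 0 : ℂ)) := by
      rw [← Complex.exp_conj, ← Complex.exp_add, map_mul, Complex.conj_I, Complex.conj_ofReal]
      congr 1; ring
    have e2 : Complex.exp (Complex.I * ((lam:ℂ) + (phi 0:ℂ))) *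
        starRingEnd ℂ (Complex.exp (Complex.I * ((lam:ℂ) + (phi 0:ℂ)))) = 1 := by
      rw [← Complex.exp_conj, ← Complex.exp_add, map_mul, Complex.conj_I, map_add,
        Complex.conj_ofReal, Complex.conj_ofReal,
        show Complex.I * ((lam:ℂ) + (phi 0:ℂ)) + -Complex.I * ((lam:ℂ) + (phi 0:ℂ)) = 0 by ring,
        Complex.exp_zero]
    rw [hU]
    simp only [gqspA0, Finset.sum_range_one, pow_zero, one_mul, map_mul, map_neg,
      Complex.conj_ofReal]
    simp only [Matrix.of_apply, Matrix.cons_val', Matrix.cons_val_zero, Matrix.cons_val_one,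
      Matrix.head_cons, Matrix.empty_val', Matrix.cons_val_fin_one, Matrix.head_fin_const,
      map_mul, map_neg, Complex.conj_ofReal]
    push_cast [Finset.sum_range_one]
    constructor
    · linear_combination (-(Complex.sin ((th 0 : ℝ) : ℂ))) * e1
    · linear_combination (Complex.cos ((th 0 : ℝ) : ℂ)) * e2
  | succ d ih =>
    have hU : gqspU (d + 1) lam phi th z =
        gqspU d lam phi th z * (gqspD z * gqspA (phi (d + 1)) (th (d + 1))) := by
      simp [gqspU, List.range_succ, Matrix.mul_assoc]
    have hstep := gqsp_step (gqspU d lam phi th z) (gqspU (d+1) lam phi th z)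
      ((-1 : ℂ) ^ d * z ^ d *
        Complex.exp (Complex.I * (((lam + ∑ j ∈ Finset.range (d + 1), phi j : ℝ)) : ℂ)))
      z (phi (d+1)) (th (d+1)) hz hU ih.1 ih.2
    have hu' : (-1 : ℂ) ^ (d+1) * z ^ (d+1) *
        Complex.exp (Complex.I * (((lam + ∑ j ∈ Finset.range (d + 2), phi j : ℝ)) : ℂ)) =
        -(z * Complex.exp (Complex.I * (phi (d+1) : ℂ))) * ((-1 : ℂ) ^ d * z ^ d *
          Complex.exp (Complex.I * (((lam + ∑ j ∈ Finset.range (d + 1), phi j : ℝ)) : ℂ))) := by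
      rw [Finset.sum_range_succ]
      push_cast
      rw [show Complex.I * ((lam : ℂ) + ((∑ j ∈ Finset.range (d + 1), (phi j : ℂ)) + (phi (d+1) : ℂ))) =
        Complex.I * ((lam : ℂ) + ∑ j ∈ Finset.range (d + 1), (phi j : ℂ)) + Complex.I * (phi (d+1) : ℂ) by ring,
        Complex.exp_add]
      ring
    rw [hu']
    exact hstep

/-- **Precise form of the second row of the GQSP matrix** (Proposition 2). With
`u(z) = (−1)^d z^d e^{i(λ + φ₀ + ⋯ + φ_d)}`, for every `z ∈ 𝕋` the `(2,1)` entry of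
`U(z)` equals `u(z) conj(U(z)₁₂)` and the `(2,2)` entry equals `−u(z) conj(U(z)₁₁)`. -/
theorem gqsp_second_row
    (d : ℕ) (hd : 1 ≤ d) (lam : ℝ) (th phi : ℕ → ℝ)
    (u : ℂ → ℂ)
    (hu : ∀ z : ℂ, u z = (-1 : ℂ) ^ d * z ^ d *
      Complex.exp (Complex.I * (((lam + ∑ j ∈ Finset.range (d + 1), phi j : ℝ)) : ℂ))) :
    ∀ z : ℂ, ‖z‖ = 1 →
      gqspU d lam phi th z 1 0 = u z * starRingEnd ℂ (gqspU d lam phi th z 0 1) ∧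
      gqspU d lam phi th z 1 1 = -(u z * starRingEnd ℂ (gqspU d lam phi th z 0 0)) := by
  intro z hz
  have hz' : starRingEnd ℂ z * z = 1 := by
    rw [mul_comm, Complex.mul_conj, Complex.normSq_eq_norm_sq, hz]
    norm_num
  rw [hu z]
  exact gqsp_main lam th phi z hz' d
end
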